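/- arXiv:2212.12277 — 6 statements merged into one kernel-verified Lean document; each statement's English description precedes it below -/
import Mathlib

section
/- Let (n,k,r) be an admissible triple of parameters. Then the expectation of an r-Lah distributed random variable satisfies E[Lah(n,k)_r] = (k(n+2r)/(n-(k-1)))·Σ_{i=1}^{n-k+1} 1/(k+2r-1+i) + r·Σ_{i=1}^{n-k} 1/(k+2r-1+i), and equivalently E[Lah(n,k)_r] = (k + [k(n+r)+r(n+1)]·Σ_{i=1}^{n-k} 1/(k+2r-1+i))/(n-(k-1)). Here E[Lah(n,k)_r] = Σ_{j=k}^n j·⌈n,j⌉_r·⦃j,k⦄_r / L(n,k)_r. -/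
open Finset Filter MeasureTheory

/-- r-Stirling numbers of the first kind. -/
noncomputable def stirFir (r : ℝ) : ℕ → ℕ → ℝ
  | 0, 0 => 1
  | 0, _ + 1 => 0
  | n + 1, 0 => ((n : ℝ) + r) * stirFir r n 0
  | n + 1, k + 1 => ((n : ℝ) + r) * stirFir r n (k + 1) + stirFir r n k

/-- r-Stirling numbers of the second kind. -/
noncomputable def stirSec (r : ℝ) : ℕ → ℕ → ℝ
  | 0, 0 => 1
  | 0, _ + 1 => 0
  | n + 1, 0 => r * stirSec r n 0
  | n + 1, k + 1 => ((k : ℝ) + 1 + r) * stirSec r n (k + 1) + stirSec r n k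

/-- The r-Lah number L(n,k)_r. -/
noncomputable def lahNum (r : ℝ) (n k : ℕ) : ℝ :=
  ∑ j ∈ Finset.Icc k n, stirFir r n j * stirSec r j k

/-- The probability mass function of the r-Lah distribution. -/
noncomputable def lahPMF (r : ℝ) (n k j : ℕ) : ℝ :=
  stirFir r n j * stirSec r j k / lahNum r n k

/-- The expectation of the r-Lah distribution. -/
noncomputable def lahExp (r : ℝ) (n k : ℕ) : ℝ :=
  (∑ j ∈ Finset.Icc k n, (j : ℝ) * stirFir r n j * stirSec r j k) / lahNum r n k


lemma stirFirS0 (r : ℝ) (n : ℕ) : stirFir r (n+1) 0 = ((n : ℝ) + r) * stirFir r n 0 := rfl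
lemma stirFirSS (r : ℝ) (n k : ℕ) :
    stirFir r (n+1) (k+1) = ((n : ℝ) + r) * stirFir r n (k + 1) + stirFir r n k := rfl
lemma stirFir00 (r : ℝ) : stirFir r 0 0 = 1 := rfl
lemma stirSec00 (s : ℝ) : stirSec s 0 0 = 1 := rfl
lemma stirSecS0 (s : ℝ) (n : ℕ) : stirSec s (n+1) 0 = s * stirSec s n 0 := rfl
lemma stirSecSS (s : ℝ) (n k : ℕ) :
    stirSec s (n+1) (k+1) = ((k : ℝ) + 1 + s) * stirSec s n (k + 1) + stirSec s n k := rfl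

lemma stirSec_zero (s : ℝ) {n k : ℕ} (h : n < k) : stirSec s n k = 0 := by
  induction n generalizing k with
  | zero => cases k with
    | zero => omega
    | succ k => rfl
  | succ n ih =>
    cases k with
    | zero => omega
    | succ k =>
      show ((k : ℝ) + 1 + s) * stirSec s n (k+1) + stirSec s n k = 0
      rw [ih (by omega), ih (by omega)]; ring

lemma stirFir_zero (r : ℝ) {n k : ℕ} (h : n < k) : stirFir r n k = 0 := by
  induction n generalizing k with
  | zero => cases k with
    | zero => omega
    | succ k => rfl
  | succ n ih =>
    cases k with
    | zero => omega
    | succ k =>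
      show ((n : ℝ) + r) * stirFir r n (k+1) + stirFir r n k = 0
      rw [ih (by omega), ih (by omega)]; ring

lemma hasDerivAt_stirSec (n k : ℕ) (s : ℝ) :
    HasDerivAt (fun s => stirSec s n k) ((n : ℝ) * stirSec s (n - 1) k) s := by
  induction n generalizing k s with
  | zero =>
    simp only [Nat.cast_zero, zero_mul]
    cases k with
    | zero => exact hasDerivAt_const s 1
    | succ k => exact hasDerivAt_const s 0
  | succ n ih =>
    cases k with
    | zero =>
      have h1 : HasDerivAt (fun s : ℝ => s * stirSec s n 0)
          (1 * stirSec s n 0 + s * ((n : ℝ) * stirSec s (n-1) 0)) s :=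
        (hasDerivAt_id s).mul (ih 0 s)
      have heq : (1 : ℝ) * stirSec s n 0 + s * ((n : ℝ) * stirSec s (n-1) 0)
          = ((n : ℝ) + 1) * stirSec s n 0 := by
        cases n with
        | zero => simp
        | succ m => simp only [Nat.add_sub_cancel, stirSec]; push_cast; ring
      simpa [Nat.add_sub_cancel, Nat.cast_succ] using heq ▸ h1
    | succ k =>
      have h1 : HasDerivAt (fun s : ℝ => ((k : ℝ) + 1 + s) * stirSec s n (k+1) + stirSec s n k)
          ((0 + 1) * stirSec s n (k+1) + ((k:ℝ)+1+s) * ((n:ℝ) * stirSec s (n-1) (k+1))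
            + (n:ℝ) * stirSec s (n-1) k) s :=
        (((hasDerivAt_const s ((k:ℝ)+1)).add (hasDerivAt_id s)).mul (ih (k+1) s)).add (ih k s)
      have heq : (0+1 : ℝ) * stirSec s n (k+1) + ((k:ℝ)+1+s) * ((n:ℝ) * stirSec s (n-1) (k+1))
            + (n:ℝ) * stirSec s (n-1) k
          = ((n : ℝ) + 1) * stirSec s (n+1-1) (k+1) := by
        cases n with
        | zero => simp [stirSec_zero s (show (0:ℕ) < k+1 by omega)]
        | succ m => simp only [Nat.add_sub_cancel, stirSec]; push_cast; ring
      simpa [Nat.add_sub_cancel, Nat.cast_succ] using heq ▸ h1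

noncomputable def L2 (r s : ℝ) (n k : ℕ) : ℝ :=
  ∑ j ∈ range (n+1), stirFir r n j * stirSec s j k

lemma L2_shift (r s : ℝ) (n k : ℕ) :
    L2 r s (n+1) k = ((n:ℝ) + r) * L2 r s n k
      + ∑ j ∈ range (n+1), stirFir r n j * stirSec s (j+1) k := by
  unfold L2
  rw [Finset.sum_range_succ' (fun j => stirFir r (n+1) j * stirSec s j k) (n+1)]
  simp only [stirFirSS, stirFirS0]
  rw [Finset.sum_range_succ (fun j => (((n:ℝ)+r) * stirFir r n (j+1) + stirFir r n j) * stirSec s (j+1) k) n]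
  rw [stirFir_zero r (show n < n+1 by omega)]
  have : ∑ j ∈ range n, (((n:ℝ)+r) * stirFir r n (j+1) + stirFir r n j) * stirSec s (j+1) k
      = (((n:ℝ)+r) * ∑ j ∈ range n, stirFir r n (j+1) * stirSec s (j+1) k)
        + ∑ j ∈ range n, stirFir r n j * stirSec s (j+1) k := by
    rw [Finset.mul_sum, ← Finset.sum_add_distrib]
    exact Finset.sum_congr rfl (fun j _ => by ring)
  rw [this]
  have h2 : ((n:ℝ)+r) * ∑ j ∈ range (n+1), stirFir r n j * stirSec s j k
      = ((n:ℝ)+r) * ((∑ j ∈ range n, stirFir r n (j+1) * stirSec s (j+1) k)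
          + stirFir r n 0 * stirSec s 0 k) := by
    rw [Finset.sum_range_succ' (fun j => stirFir r n j * stirSec s j k) n]
  have h3 : ∑ j ∈ range (n+1), stirFir r n j * stirSec s (j+1) k
      = (∑ j ∈ range n, stirFir r n j * stirSec s (j+1) k)
        + stirFir r n n * stirSec s (n+1) k := by
    rw [Finset.sum_range_succ]
  rw [h2, h3]; ring

lemma L2_rec0 (r s : ℝ) (n : ℕ) : L2 r s (n+1) 0 = ((n:ℝ) + r + s) * L2 r s n 0 := by
  rw [L2_shift]
  simp only [stirSecS0]
  have : ∑ j ∈ range (n+1), stirFir r n j * (s * stirSec s j 0)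
      = s * L2 r s n 0 := by
    unfold L2; rw [Finset.mul_sum]; exact Finset.sum_congr rfl (fun j _ => by ring)
  rw [this]; ring

lemma L2_recS (r s : ℝ) (n k : ℕ) :
    L2 r s (n+1) (k+1) = ((n:ℝ) + (k:ℝ) + 1 + r + s) * L2 r s n (k+1) + L2 r s n k := by
  rw [L2_shift]
  simp only [stirSecSS]
  have : ∑ j ∈ range (n+1), stirFir r n j * (((k:ℝ)+1+s) * stirSec s j (k+1) + stirSec s j k)
      = ((k:ℝ)+1+s) * L2 r s n (k+1) + L2 r s n k := by
    unfold L2; rw [Finset.mul_sum, ← Finset.sum_add_distrib]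
    exact Finset.sum_congr rfl (fun j _ => by ring)
  rw [this]; ring

lemma L2_closed (r s : ℝ) (n k : ℕ) :
    L2 r s n k = (n.choose k : ℝ) * ∏ m ∈ range (n - k), ((k:ℝ) + r + s + (m:ℝ)) := by
  induction n generalizing k with
  | zero =>
    cases k with
    | zero => simp [L2, stirFir00, stirSec00]
    | succ k => simp [L2, stirFir00, stirSec_zero s (show (0:ℕ) < k+1 by omega)]
  | succ n ih =>
    cases k with
    | zero =>
      rw [L2_rec0, ih 0]
      simp only [Nat.choose_zero_right, Nat.cast_one, one_mul, Nat.sub_zero]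
      rw [Finset.prod_range_succ]
      push_cast; ring
    | succ k =>
      rw [L2_recS, ih (k+1), ih k]
      rcases le_or_gt (k+1) n with h | h
      · have e1 : n + 1 - (k + 1) = (n - (k+1)) + 1 := by omega
        have e2 : n - k = (n - (k+1)) + 1 := by omega
        set N := n - (k+1) with hN
        rw [e1, e2]
        have hNr : ((N:ℕ):ℝ) = (n:ℝ) - (k:ℝ) - 1 := by
          rw [hN, Nat.cast_sub h]; push_cast; ring
        set Q := ∏ m ∈ range N, (((k+1:ℕ):ℝ) + r + s + (m:ℝ)) with hQ
        have p1 : ∏ m ∈ range (N+1), (((k+1:ℕ):ℝ) + r + s + (m:ℝ))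
            = Q * ((n:ℝ) + r + s) := by
          rw [hQ, Finset.prod_range_succ]
          congr 1
          rw [hNr]; push_cast; ring
        have p2 : ∏ m ∈ range (N+1), ((k:ℝ) + r + s + (m:ℝ))
            = ((k:ℝ) + r + s) * Q := by
          rw [Finset.prod_range_succ' (fun m => ((k:ℝ) + r + s + (m:ℝ))) N, hQ]
          have : ∏ m ∈ range N, ((k:ℝ) + r + s + ((m+1:ℕ):ℝ))
              = ∏ m ∈ range N, (((k+1:ℕ):ℝ) + r + s + (m:ℝ)) :=
            Finset.prod_congr rfl (fun m _ => by push_cast; ring)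
          rw [this]; push_cast; ring
        rw [p1, p2]
        have hch : (((n+1).choose (k+1) : ℕ) : ℝ) = (n.choose (k+1) : ℝ) + (n.choose k : ℝ) := by
          rw [Nat.choose_succ_succ]; push_cast; ring
        rw [hch]
        have hid : (n.choose k : ℝ) * ((n:ℝ) - (k:ℝ)) = (n.choose (k+1) : ℝ) * ((k:ℝ) + 1) := by
          have h2 := Nat.choose_succ_right_eq n k
          have h3 : ((n.choose (k+1) * (k+1) : ℕ) : ℝ) = ((n.choose k * (n - k) : ℕ) : ℝ) := by
            rw [h2]
          rw [Nat.cast_mul, Nat.cast_mul, Nat.cast_sub (by omega : k ≤ n)] at h3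
          push_cast at h3 ⊢
          linarith
        linear_combination (-Q) * hid
      · have h1 : n.choose (k+1) = 0 := Nat.choose_eq_zero_of_lt (by omega)
        rcases Nat.lt_or_ge n k with h2 | h2
        · have h3 : n.choose k = 0 := Nat.choose_eq_zero_of_lt h2
          have h4 : (n+1).choose (k+1) = 0 := Nat.choose_eq_zero_of_lt (by omega)
          simp [h1, h3, h4]
        · have hnk : n = k := by omega
          subst hnk
          simp [h1, Nat.sub_self, Nat.choose_self]

lemma hasDerivAt_prod_lin (c : ℝ) (N : ℕ) (x : ℝ) (h : ∀ m ∈ range N, c + x + (m:ℝ) ≠ 0) :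
    HasDerivAt (fun s => ∏ m ∈ range N, (c + s + (m:ℝ)))
      ((∏ m ∈ range N, (c + x + (m:ℝ))) * ∑ m ∈ range N, 1 / (c + x + (m:ℝ))) x := by
  induction N with
  | zero => simpa using hasDerivAt_const x (1:ℝ)
  | succ N ih =>
    have hN : c + x + (N:ℝ) ≠ 0 := h N (by simp)
    have ih' := ih (fun m hm => h m (by simp at hm ⊢; omega))
    have hlin : HasDerivAt (fun s : ℝ => c + s + (N:ℝ)) 1 x := by
      exact ((hasDerivAt_id' x).const_add c).add_const (N:ℝ)
    have hmul : HasDerivAt (fun s => (∏ m ∈ range N, (c + s + (m:ℝ))) * (c + s + (N:ℝ))) _ x := ih'.mul hlin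
    have : (fun s => ∏ m ∈ range (N+1), (c + s + (m:ℝ)))
        = fun s => (∏ m ∈ range N, (c + s + (m:ℝ))) * (c + s + (N:ℝ)) := by
      funext s; rw [Finset.prod_range_succ]
    rw [this, Finset.prod_range_succ, Finset.sum_range_succ]
    convert hmul using 1
    field_simp

noncomputable def D2 (r s : ℝ) (n k : ℕ) : ℝ :=
  ∑ j ∈ range (n+1), stirFir r n j * ((j:ℝ) * stirSec s (j-1) k)

lemma hasDerivAt_L2 (r : ℝ) (n k : ℕ) (s : ℝ) :
    HasDerivAt (fun s => L2 r s n k) (D2 r s n k) s := by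
  unfold L2 D2
  exact HasDerivAt.fun_sum fun j _ => (hasDerivAt_stirSec j k s).const_mul (stirFir r n j)

/-- generic formula for D2 when factors are nonzero -/
lemma D2_eq (r s : ℝ) (n k : ℕ) (h : ∀ m ∈ range (n-k), (k:ℝ) + r + s + (m:ℝ) ≠ 0) :
    D2 r s n k = (n.choose k : ℝ) * ((∏ m ∈ range (n-k), ((k:ℝ) + r + s + (m:ℝ)))
      * ∑ m ∈ range (n-k), 1 / ((k:ℝ) + r + s + (m:ℝ))) := by
  have h1 : (fun s => L2 r s n k)
      = fun s => (n.choose k : ℝ) * ∏ m ∈ range (n - k), ((k:ℝ) + r + s + (m:ℝ)) := by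
    funext s; exact L2_closed r s n k
  have h2 : HasDerivAt (fun s => L2 r s n k)
      ((n.choose k : ℝ) * ((∏ m ∈ range (n-k), ((k:ℝ) + r + s + (m:ℝ)))
        * ∑ m ∈ range (n-k), 1 / ((k:ℝ) + r + s + (m:ℝ)))) s := by
    rw [h1]
    exact (hasDerivAt_prod_lin ((k:ℝ)+r) (n-k) s h).const_mul _
  exact (hasDerivAt_L2 r n k s).unique h2

/-- special case: k = 0, with r + s = 0 (so the first factor vanishes) -/
lemma D2_eq0 (r s : ℝ) (n : ℕ) (hn : 1 ≤ n) (hrs : r + s = 0) :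
    D2 r s n 0 = ∏ m ∈ range (n-1), ((1 + r) + s + (m:ℝ)) := by
  have h1 : (fun s' : ℝ => L2 r s' n 0)
      = fun s' => (r + s') * ∏ m ∈ range (n-1), ((1 + r) + s' + (m:ℝ)) := by
    funext s'
    rw [L2_closed]
    simp only [Nat.choose_zero_right, Nat.cast_one, one_mul, Nat.sub_zero]
    have e : n = (n-1)+1 := by omega
    rw [e, Finset.prod_range_succ' (fun m => ((0:ℕ):ℝ) + r + s' + (m:ℝ)) (n-1)]
    have : ∏ m ∈ range (n-1), (((0:ℕ):ℝ) + r + s' + ((m+1:ℕ):ℝ))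
        = ∏ m ∈ range (n-1), ((1 + r) + s' + (m:ℝ)) :=
      Finset.prod_congr rfl (fun m _ => by push_cast; ring)
    rw [this]; push_cast; ring
  have hfac : ∀ m ∈ range (n-1), (1 + r) + s + (m:ℝ) ≠ 0 := by
    intro m _
    have : (1 + r) + s + (m:ℝ) = 1 + (m:ℝ) := by linear_combination hrs
    rw [this]; positivity
  have hprod := hasDerivAt_prod_lin (1+r) (n-1) s hfac
  have hlin : HasDerivAt (fun s' : ℝ => r + s') 1 s := by
    exact (hasDerivAt_id' s).const_add r
  have h2 : HasDerivAt (fun s' => (r + s') * ∏ m ∈ range (n-1), ((1 + r) + s' + (m:ℝ))) _ s := hlin.mul hprod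
  rw [← h1] at h2
  have := (hasDerivAt_L2 r n 0 s).unique h2
  rw [this, hrs]
  ring

noncomputable def Snum (r s : ℝ) (n k : ℕ) : ℝ :=
  ∑ j ∈ range (n+1), (j:ℝ) * stirFir r n j * stirSec s j k

lemma Snum_split0 (r s : ℝ) (n : ℕ) : Snum r s n 0 = s * D2 r s n 0 := by
  unfold Snum D2
  rw [Finset.mul_sum]
  refine Finset.sum_congr rfl (fun j _ => ?_)
  cases j with
  | zero => simp
  | succ m => rw [stirSecS0]; simp only [Nat.add_sub_cancel]; push_cast; ring

lemma Snum_splitS (r s : ℝ) (n k : ℕ) :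
    Snum r s n (k+1) = ((k:ℝ) + 1 + s) * D2 r s n (k+1) + D2 r s n k := by
  unfold Snum D2
  rw [Finset.mul_sum, ← Finset.sum_add_distrib]
  refine Finset.sum_congr rfl (fun j _ => ?_)
  cases j with
  | zero => simp [stirSec_zero s (show (0:ℕ) < k+1 by omega)]
  | succ m => rw [stirSecSS]; simp only [Nat.add_sub_cancel]; push_cast; ring

lemma sum_Icc_range (f : ℕ → ℝ) (N : ℕ) : ∑ i ∈ Icc 1 N, f i = ∑ m ∈ range N, f (m+1) := by
  rw [show Icc 1 N = Ico 1 (N+1) by rw [Finset.Ico_add_one_right_eq_Icc], Finset.sum_Ico_eq_sum_range]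
  simp [add_comm]

lemma Icc_to_range (r s : ℝ) (n k : ℕ) :
    ∑ j ∈ Icc k n, stirFir r n j * stirSec s j k = L2 r s n k := by
  unfold L2
  refine Finset.sum_subset (fun j hj => ?_) (fun j hj hj2 => ?_)
  · simp only [mem_Icc] at hj; simp only [mem_range]; omega
  · simp only [mem_range] at hj; simp only [mem_Icc] at hj2
    rw [stirSec_zero s (show j < k by omega), mul_zero]

lemma Icc_to_range' (r s : ℝ) (n k : ℕ) :
    ∑ j ∈ Icc k n, (j:ℝ) * stirFir r n j * stirSec s j k = Snum r s n k := by
  unfold Snum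
  refine Finset.sum_subset (fun j hj => ?_) (fun j hj hj2 => ?_)
  · simp only [mem_Icc] at hj; simp only [mem_range]; omega
  · simp only [mem_range] at hj; simp only [mem_Icc] at hj2
    rw [stirSec_zero s (show j < k by omega), mul_zero]

theorem expectation_rLah (n k : ℕ) (r : ℝ) (hn : 1 ≤ n) (hk : k ≤ n)
    (hr : 0 ≤ r) (hmax : 0 < k ∨ 0 < r) :
    lahExp r n k =
      ((k : ℝ) * ((n : ℝ) + 2 * r) / ((n : ℝ) - (k : ℝ) + 1)) *
        (∑ i ∈ Finset.Icc 1 (n - k + 1), 1 / ((k : ℝ) + 2 * r - 1 + (i : ℝ))) +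
      r * ∑ i ∈ Finset.Icc 1 (n - k), 1 / ((k : ℝ) + 2 * r - 1 + (i : ℝ)) ∧
    lahExp r n k =
      ((k : ℝ) + ((k : ℝ) * ((n : ℝ) + r) + r * ((n : ℝ) + 1)) *
        ∑ i ∈ Finset.Icc 1 (n - k), 1 / ((k : ℝ) + 2 * r - 1 + (i : ℝ))) /
      ((n : ℝ) - (k : ℝ) + 1) := by
  have hnk1 : ((n:ℝ) - (k:ℝ) + 1) ≠ 0 := by
    have : (k:ℝ) ≤ (n:ℝ) := by exact_mod_cast hk
    linarith
  have hn2r : ((n:ℝ) + 2*r) ≠ 0 := by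
    have : (1:ℝ) ≤ (n:ℝ) := by exact_mod_cast hn
    linarith
  set H : ℝ := ∑ i ∈ Finset.Icc 1 (n - k), 1 / ((k : ℝ) + 2 * r - 1 + (i : ℝ)) with hHdef
  have hE : lahExp r n k = lahExp r n k := rfl
  have hlah : lahExp r n k = Snum r r n k / L2 r r n k := by
    unfold lahExp lahNum
    rw [Icc_to_range, Icc_to_range']
  -- range-form of H
  have hHr : ∑ m ∈ range (n-k), 1 / ((k:ℝ) + r + r + (m:ℝ)) = H := by
    rw [hHdef, sum_Icc_range (fun i => 1 / ((k : ℝ) + 2 * r - 1 + (i : ℝ))) (n-k)]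
    exact Finset.sum_congr rfl (fun m _ => by push_cast; ring_nf)
  have key : lahExp r n k
      = ((k:ℝ) + ((k:ℝ) * ((n:ℝ) + r) + r * ((n:ℝ) + 1)) * H) / ((n:ℝ) - (k:ℝ) + 1) := by
    rcases Nat.eq_zero_or_pos k with hk0 | hkpos
    · -- case k = 0
      subst hk0
      have hrpos : 0 < r := hmax.resolve_left (by omega)
      have hfac : ∀ m ∈ range (n-0), ((0:ℕ):ℝ) + r + r + (m:ℝ) ≠ 0 := by
        intro m _
        have : (0:ℝ) ≤ (m:ℝ) := Nat.cast_nonneg m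
        push_cast; nlinarith
      have hPne : (∏ m ∈ range (n-0), (((0:ℕ):ℝ) + r + r + (m:ℝ))) ≠ 0 := by
        apply ne_of_gt
        apply Finset.prod_pos; intro m _
        have : (0:ℝ) ≤ (m:ℝ) := Nat.cast_nonneg m
        push_cast; nlinarith
      rw [hlah, Snum_split0, D2_eq r r n 0 hfac, L2_closed, hHr]
      simp only [Nat.choose_zero_right, Nat.cast_one, one_mul, Nat.cast_zero] at hPne ⊢
      field_simp
      ring
    · -- k ≥ 1
      obtain ⟨k', rfl⟩ : ∃ k', k = k' + 1 := ⟨k - 1, by omega⟩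
      have hfacS : ∀ m ∈ range (n-(k'+1)), ((k'+1:ℕ):ℝ) + r + r + (m:ℝ) ≠ 0 := by
        intro m _
        have h1 : (0:ℝ) ≤ (m:ℝ) := Nat.cast_nonneg m
        have h2 : (0:ℝ) ≤ (k':ℝ) := Nat.cast_nonneg k'
        push_cast; nlinarith
      have hPpos : (0:ℝ) < ∏ m ∈ range (n-(k'+1)), (((k'+1:ℕ):ℝ) + r + r + (m:ℝ)) := by
        apply Finset.prod_pos; intro m _
        have h1 : (0:ℝ) ≤ (m:ℝ) := Nat.cast_nonneg m
        have h2 : (0:ℝ) ≤ (k':ℝ) := Nat.cast_nonneg k'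
        push_cast; nlinarith
      have hCpos : (0:ℝ) < (n.choose (k'+1) : ℝ) := by
        exact_mod_cast Nat.choose_pos hk
      by_cases hC : k' = 0 ∧ r = 0
      · -- special case k = 1, r = 0
        obtain ⟨hk'0, hr0⟩ := hC
        subst hk'0; subst hr0
        rw [hlah, Snum_splitS, D2_eq 0 0 n 1 hfacS, L2_closed,
          D2_eq0 0 0 n hn (by ring), hHr]
        have hg : ∏ m ∈ range (n-1), ((1 + (0:ℝ)) + 0 + (m:ℝ))
            = ∏ m ∈ range (n-1), (((0+1:ℕ):ℝ) + 0 + 0 + (m:ℝ)) :=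
          Finset.prod_congr rfl (fun m _ => by norm_num)
        rw [hg]
        have hch : ((n.choose (0+1) : ℕ) : ℝ) = (n:ℝ) := by
          rw [Nat.choose_one_right]
        rw [hch]
        have hnne : (n:ℝ) ≠ 0 := by positivity
        have hPne := ne_of_gt hPpos
        field_simp
        ring
      · -- main case
        have hcpos : (0:ℝ) < (k':ℝ) + 2*r := by
          rcases Nat.eq_zero_or_pos k' with h0 | h0
          · subst h0
            have hrne : r ≠ 0 := fun h => hC ⟨rfl, h⟩
            have : 0 < r := lt_of_le_of_ne hr (Ne.symm hrne)
            push_cast; nlinarith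
          · have : (1:ℝ) ≤ (k':ℝ) := by exact_mod_cast h0
            nlinarith
        have hfacP : ∀ m ∈ range (n-k'), ((k':ℕ):ℝ) + r + r + (m:ℝ) ≠ 0 := by
          intro m _
          have h1 : (0:ℝ) ≤ (m:ℝ) := Nat.cast_nonneg m
          nlinarith
        have e : n - k' = (n - (k'+1)) + 1 := by omega
        set N := n - (k'+1) with hNdef
        set P : ℝ := ∏ m ∈ range N, (((k'+1:ℕ):ℝ) + r + r + (m:ℝ)) with hPdef
        have hP' : ∏ m ∈ range (N+1), ((k':ℝ) + r + r + (m:ℝ)) = ((k':ℝ) + 2*r) * P := by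
          rw [Finset.prod_range_succ' (fun m => ((k':ℝ) + r + r + (m:ℝ))) N]
          have : ∏ m ∈ range N, ((k':ℝ) + r + r + ((m+1:ℕ):ℝ)) = P :=
            Finset.prod_congr rfl (fun m _ => by push_cast; ring)
          rw [this]; push_cast; ring
        have hH' : ∑ m ∈ range (N+1), 1 / ((k':ℝ) + r + r + (m:ℝ))
            = 1 / ((k':ℝ) + 2*r) + H := by
          rw [Finset.sum_range_succ' (fun m => 1 / ((k':ℝ) + r + r + (m:ℝ))) N]
          have h1 : ∑ m ∈ range N, 1 / ((k':ℝ) + r + r + ((m+1:ℕ):ℝ))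
              = ∑ m ∈ range N, 1 / (((k'+1:ℕ):ℝ) + r + r + (m:ℝ)) :=
            Finset.sum_congr rfl (fun m _ => by push_cast; ring_nf)
          rw [h1, hHr]; push_cast; ring
        have hch : (n.choose k' : ℝ)
            = (n.choose (k'+1) : ℝ) * ((k':ℝ)+1) / ((n:ℝ) - ((k'+1:ℕ):ℝ) + 1) := by
          have h2 := Nat.choose_succ_right_eq n k'
          have h3 : ((n.choose (k'+1) * (k'+1) : ℕ) : ℝ) = ((n.choose k' * (n - k') : ℕ) : ℝ) := by
            rw [h2]
          rw [Nat.cast_mul, Nat.cast_mul, Nat.cast_sub (by omega : k' ≤ n)] at h3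
          rw [eq_div_iff (by push_cast at hnk1 ⊢; exact hnk1)]
          push_cast at h3 ⊢
          linarith
        rw [hlah, Snum_splitS, D2_eq r r n (k'+1) hfacS, L2_closed,
          D2_eq r r n k' hfacP, e, hP', hH', hHr, hch]
        have hPne := ne_of_gt hPpos
        have hCne := ne_of_gt hCpos
        have hcne := ne_of_gt hcpos
        rw [← hPdef]
        push_cast at hnk1 hPne hCne ⊢
        field_simp
        linear_combination ((k':ℝ)+1) * mul_inv_cancel₀ hcne
  refine ⟨?_, key⟩
  rw [key]
  have hsplit : ∑ i ∈ Finset.Icc 1 (n - k + 1), 1 / ((k : ℝ) + 2 * r - 1 + (i : ℝ))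
      = H + 1 / ((n:ℝ) + 2*r) := by
    rw [Finset.sum_Icc_succ_top (by omega : 1 ≤ n - k + 1)]
    rw [hHdef]
    congr 1
    have : ((n - k + 1 : ℕ) : ℝ) = (n:ℝ) - (k:ℝ) + 1 := by
      push_cast [Nat.cast_sub hk]; ring
    rw [this]; ring_nf
  rw [hsplit]
  field_simp
  ring
end

section
/- For every n ∈ ℕ, every k ∈ {0,...,n}, every real r and every real t, one has k! · Σ_{j=k}^n t^j · ⌈n,j⌉_r · ⦃j,k⦄_r = Σ_{m=0}^k (-1)^{k-m} · C(k,m) · Π_{i=0}^{n-1} (r(t+1) + t·m + i), where C(k,m) is the ordinary binomial coefficient and the product over i ∈ {0,...,n-1} is the rising factorial of r(t+1)+tm of length n. -/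
open Finset Filter MeasureTheory

lemma stirFir_zero_of_lt (r : ℝ) : ∀ n k, n < k → stirFir r n k = 0 := by
  intro n
  induction n with
  | zero =>
    intro k hk
    match k, hk with
    | k+1, _ => rfl
  | succ n ih =>
    intro k hk
    match k, hk with
    | k+1, hk =>
      show ((n : ℝ) + r) * stirFir r n (k + 1) + stirFir r n k = 0
      rw [ih (k+1) (by omega), ih k (by omega)]
      ring

lemma stirSec_zero_of_lt (r : ℝ) : ∀ n k, n < k → stirSec r n k = 0 := by
  intro n
  induction n with
  | zero =>
    intro k hk
    match k, hk with
    | k+1, _ => rfl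
  | succ n ih =>
    intro k hk
    match k, hk with
    | k+1, hk =>
      show ((k : ℝ) + 1 + r) * stirSec r n (k + 1) + stirSec r n k = 0
      rw [ih (k+1) (by omega), ih k (by omega)]
      ring

lemma lemA (r : ℝ) : ∀ (n : ℕ) (x : ℝ), ∑ j ∈ Finset.range (n+1), stirFir r n j * x ^ j
    = ∏ i ∈ Finset.range n, (x + r + (i : ℝ)) := by
  intro n
  induction n with
  | zero => intro x; simp [stirFir]
  | succ n ih =>
    intro x
    have key : ∑ j ∈ Finset.range (n+2), stirFir r (n+1) j * x ^ j
        = ((n : ℝ) + r) * (∑ j ∈ Finset.range (n+2), stirFir r n j * x ^ j)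
          + x * ∑ j ∈ Finset.range (n+1), stirFir r n j * x ^ j := by
      rw [Finset.sum_range_succ' (fun j => stirFir r (n+1) j * x ^ j) (n+1),
        Finset.sum_range_succ' (fun j => stirFir r n j * x ^ j) (n+1)]
      have h1 : ∀ j, stirFir r (n+1) (j+1) = ((n:ℝ)+r) * stirFir r n (j+1) + stirFir r n j :=
        fun j => rfl
      have h0 : stirFir r (n+1) 0 = ((n:ℝ)+r) * stirFir r n 0 := rfl
      simp only [h1]
      rw [h0, Finset.sum_congr rfl (fun j _ => add_mul _ _ _ :
        ∀ j ∈ Finset.range (n+1), (((n:ℝ)+r) * stirFir r n (j+1) + stirFir r n j) * x ^ (j+1)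
          = ((n:ℝ)+r) * stirFir r n (j+1) * x ^ (j+1) + stirFir r n j * x ^ (j+1)),
        Finset.sum_add_distrib,
        Finset.sum_congr rfl (fun j _ => by ring :
          ∀ j ∈ Finset.range (n+1), ((n:ℝ)+r) * stirFir r n (j+1) * x ^ (j+1)
            = ((n:ℝ)+r) * (stirFir r n (j+1) * x ^ (j+1))),
        Finset.sum_congr rfl (fun j _ => by ring :
          ∀ j ∈ Finset.range (n+1), stirFir r n j * x ^ (j+1)
            = x * (stirFir r n j * x ^ j)),
        ← Finset.mul_sum, ← Finset.mul_sum]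
      ring
    rw [key, Finset.sum_range_succ, stirFir_zero_of_lt r n (n+1) (by omega), ih,
      Finset.prod_range_succ]
    ring

lemma lemB (r : ℝ) : ∀ (j k : ℕ), (k.factorial : ℝ) * stirSec r j k =
    ∑ m ∈ Finset.range (k+1), (-1:ℝ)^(k-m) * (k.choose m : ℝ) * ((m:ℝ)+r)^j := by
  intro j
  induction j with
  | zero =>
    intro k
    have hR : ∑ m ∈ Finset.range (k+1), (-1:ℝ)^(k-m) * (k.choose m : ℝ) * ((m:ℝ)+r)^0
        = ((1:ℝ) + (-1))^k := by
      rw [add_pow]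
      refine Finset.sum_congr rfl ?_
      intro m hm
      rw [one_pow, pow_zero]
      ring
    rw [hR]
    match k with
    | 0 => norm_num [stirSec]
    | k+1 => norm_num [stirSec]
  | succ j ih =>
    intro k
    match k with
    | 0 =>
      have hrec0 : stirSec r (j+1) 0 = r * stirSec r j 0 := rfl
      have h0 : stirSec r j 0 = ((0:ℝ)+r)^j := by
        have := ih 0
        simpa using this
      rw [hrec0, h0, Finset.sum_range_one]
      norm_num [pow_succ]
      try ring
    | k+1 =>
      have hrec : stirSec r (j+1) (k+1)
          = ((k:ℝ) + 1 + r) * stirSec r j (k+1) + stirSec r j k := rfl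
      have hfac : ((k+1).factorial : ℝ) = ((k:ℝ)+1) * (k.factorial : ℝ) := by
        push_cast [Nat.factorial_succ]; ring
      have step : ((k+1).factorial : ℝ) * stirSec r (j+1) (k+1)
          = ((k:ℝ)+1+r) * (((k+1).factorial : ℝ) * stirSec r j (k+1))
            + ((k:ℝ)+1) * ((k.factorial : ℝ) * stirSec r j k) := by
        rw [hrec, hfac]; ring
      rw [step, ih (k+1), ih k]
      -- extend the second sum to range (k+2)
      have hext : ∑ m ∈ Finset.range (k+1), (-1:ℝ)^(k-m) * (k.choose m : ℝ) * ((m:ℝ)+r)^j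
          = ∑ m ∈ Finset.range (k+2), (-1:ℝ)^(k-m) * (k.choose m : ℝ) * ((m:ℝ)+r)^j := by
        rw [Finset.sum_range_succ (fun m => (-1:ℝ)^(k-m) * (k.choose m : ℝ) * ((m:ℝ)+r)^j) (k+1)]
        simp [Nat.choose_succ_self]
      rw [hext, Finset.mul_sum, Finset.mul_sum, ← Finset.sum_add_distrib]
      refine Finset.sum_congr rfl ?_
      intro m hm
      rw [Finset.mem_range] at hm
      rcases Nat.lt_or_ge m (k+1) with hmk | hmk
      · -- m ≤ k
        have hs : k + 1 - m = (k - m) + 1 := by omega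
        have hchoose := Nat.choose_mul_succ_eq k m
        have hchooseR : ((k:ℝ) + 1 - (m:ℝ)) * ((k+1).choose m : ℝ)
            = ((k:ℝ)+1) * (k.choose m : ℝ) := by
          have h := congrArg (Nat.cast (R := ℝ)) hchoose
          push_cast [Nat.cast_sub (show m ≤ k+1 by omega)] at h
          linarith [h]
        rw [hs, pow_succ, pow_succ]
        linear_combination (-((-1:ℝ))^(k-m)) * ((m:ℝ)+r)^j * hchooseR
      · -- m = k+1
        have hm1 : m = k+1 := by omega
        subst hm1
        have h1 : (k+1) - (k+1) = 0 := by omega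
        have h2 : k - (k+1) = 0 := by omega
        rw [h1, h2]
        simp [Nat.choose_succ_self, pow_succ]
        ring

theorem generating_sum_rStirling (n k : ℕ) (hk : k ≤ n) (r t : ℝ) :
    (k.factorial : ℝ) * ∑ j ∈ Finset.Icc k n, t ^ j * stirFir r n j * stirSec r j k =
      ∑ m ∈ Finset.range (k + 1), (-1 : ℝ) ^ (k - m) * (k.choose m : ℝ) *
        ∏ i ∈ Finset.range n, (r * (t + 1) + t * (m : ℝ) + (i : ℝ)) := by
  have hsub : Finset.Icc k n ⊆ Finset.range (n+1) := by
    intro j hj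
    rw [Finset.mem_Icc] at hj
    rw [Finset.mem_range]
    omega
  have hvan : ∀ j ∈ Finset.range (n+1), j ∉ Finset.Icc k n →
      t ^ j * stirFir r n j * stirSec r j k = 0 := by
    intro j hj hj2
    rw [Finset.mem_range] at hj
    rw [Finset.mem_Icc] at hj2
    rw [stirSec_zero_of_lt r j k (by omega)]
    ring
  rw [Finset.sum_subset hsub hvan, Finset.mul_sum]
  have step1 : ∀ j ∈ Finset.range (n+1), (k.factorial : ℝ) * (t ^ j * stirFir r n j * stirSec r j k)
      = ∑ m ∈ Finset.range (k+1),
          (-1:ℝ)^(k-m) * (k.choose m : ℝ) * (stirFir r n j * (t*((m:ℝ)+r))^j) := by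
    intro j _
    have h1 : (k.factorial : ℝ) * (t ^ j * stirFir r n j * stirSec r j k)
        = t ^ j * stirFir r n j * ((k.factorial : ℝ) * stirSec r j k) := by ring
    rw [h1, lemB, Finset.mul_sum]
    refine Finset.sum_congr rfl ?_
    intro m _
    rw [mul_pow]
    ring
  rw [Finset.sum_congr rfl step1, Finset.sum_comm]
  refine Finset.sum_congr rfl ?_
  intro m _
  have h2 : ∀ j ∈ Finset.range (n+1),
      (-1:ℝ)^(k-m) * (k.choose m : ℝ) * (stirFir r n j * (t*((m:ℝ)+r))^j)
      = ((-1:ℝ)^(k-m) * (k.choose m : ℝ)) * (stirFir r n j * (t*((m:ℝ)+r))^j) := by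
    intro j _; ring
  rw [Finset.sum_congr rfl h2, ← Finset.mul_sum, lemA]
  congr 1
  refine Finset.prod_congr rfl ?_
  intro i _
  ring
end

section
/- For every integer z ≥ 1 and every real number ν > z - 1, one has Σ_{m=1}^{z} C(ν, z-m)·(-1)^{m-1}/m = C(ν, z) · Σ_{i=0}^{z-1} 1/(ν - i), where C(ν, j) := ν(ν-1)⋯(ν-j+1)/j! denotes the generalized binomial coefficient for real ν and j ∈ ℕ. -/
open Finset Filter MeasureTheory

/-- Generalized binomial coefficient for real upper argument. -/
noncomputable def genChoose (ν : ℝ) (j : ℕ) : ℝ :=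
  (∏ i ∈ Finset.range j, (ν - (i : ℝ))) / (j.factorial : ℝ)

lemma genChoose_zero (ν : ℝ) : genChoose ν 0 = 1 := by simp [genChoose]

lemma genChoose_succ (ν : ℝ) (j : ℕ) :
    ((j : ℝ) + 1) * genChoose ν (j + 1) = (ν - j) * genChoose ν j := by
  unfold genChoose
  rw [Finset.prod_range_succ, Nat.factorial_succ]
  have h1 : (j.factorial : ℝ) ≠ 0 := Nat.cast_ne_zero.mpr j.factorial_ne_zero
  push_cast
  field_simp

noncomputable def Fsum (ν : ℝ) (z : ℕ) : ℝ :=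
  ∑ m ∈ Finset.Icc 1 z, genChoose ν (z - m) * (-1 : ℝ) ^ (m - 1) / (m : ℝ)

noncomputable def Ssum (ν : ℝ) (z : ℕ) : ℝ :=
  ∑ i ∈ Finset.range z, genChoose ν (z - 1 - i) * (-1 : ℝ) ^ i

lemma Fsum_range (ν : ℝ) (z : ℕ) :
    Fsum ν z = ∑ i ∈ Finset.range z, genChoose ν (z - 1 - i) * (-1 : ℝ) ^ i / ((i : ℝ) + 1) := by
  rw [Fsum, ← Finset.Ico_add_one_right_eq_Icc, Finset.sum_Ico_eq_sum_range]
  simp only [Nat.add_sub_cancel]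
  refine Finset.sum_congr rfl fun i _ => ?_
  have h1 : z - (1 + i) = z - 1 - i := by omega
  have h2 : 1 + i - 1 = i := by omega
  rw [h1, h2]
  push_cast
  ring

lemma Ssum_succ (ν : ℝ) (z : ℕ) :
    Ssum ν (z + 1) = genChoose ν z - Ssum ν z := by
  rw [Ssum, Finset.sum_range_succ', Ssum]
  have h : ∀ i ∈ Finset.range z, genChoose ν (z + 1 - 1 - (i + 1)) * (-1 : ℝ) ^ (i + 1)
      = -(genChoose ν (z - 1 - i) * (-1 : ℝ) ^ i) := by
    intro i _
    have h1 : z + 1 - 1 - (i + 1) = z - 1 - i := by omega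
    rw [h1, pow_succ]
    ring
  rw [Finset.sum_congr rfl h, Finset.sum_neg_distrib]
  simp [genChoose_zero]
  ring

lemma key (ν : ℝ) (z : ℕ) :
    ((z : ℝ) + 1) * Fsum ν (z + 1) = (ν - z) * Fsum ν z + genChoose ν z := by
  rw [Fsum_range, Finset.mul_sum]
  have step : ∀ i ∈ Finset.range (z + 1),
      ((z : ℝ) + 1) * (genChoose ν (z + 1 - 1 - i) * (-1 : ℝ) ^ i / ((i : ℝ) + 1))
      = (if i < z then (ν - ((z - 1 - i : ℕ) : ℝ)) * genChoose ν (z - 1 - i) * (-1 : ℝ) ^ i / ((i : ℝ) + 1) else 0)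
        + genChoose ν (z - i) * (-1 : ℝ) ^ i := by
    intro i hi
    rw [Finset.mem_range] at hi
    have h0 : z + 1 - 1 - i = z - i := by omega
    rw [h0]
    have hne : ((i : ℝ) + 1) ≠ 0 := by positivity
    by_cases hiz : i < z
    · rw [if_pos hiz]
      have h1 : z - i = (z - 1 - i) + 1 := by omega
      have h2 : ((z : ℝ) + 1) = ((z - i : ℕ) : ℝ) + ((i : ℝ) + 1) := by
        have : ((z - i : ℕ) : ℝ) = (z : ℝ) - i := by
          rw [Nat.cast_sub (by omega)]
        rw [this]; ring
      have h3 : ((z - i : ℕ) : ℝ) * genChoose ν (z - i)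
          = (ν - ((z - 1 - i : ℕ) : ℝ)) * genChoose ν (z - 1 - i) := by
        rw [h1]
        push_cast
        rw [genChoose_succ ν (z - 1 - i)]
      have expand : ((z : ℝ) + 1) * (genChoose ν (z - i) * (-1 : ℝ) ^ i / ((i : ℝ) + 1))
          = (((z - i : ℕ) : ℝ) * genChoose ν (z - i)) * (-1 : ℝ) ^ i / ((i : ℝ) + 1)
            + genChoose ν (z - i) * (-1 : ℝ) ^ i := by
        rw [h2]; field_simp
      rw [expand, h3]
    · rw [if_neg hiz]
      have h1 : i = z := by omega
      subst h1
      simp only [Nat.sub_self, genChoose_zero, zero_add]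
      field_simp
  rw [Finset.sum_congr rfl step, Finset.sum_add_distrib]
  have hS : ∑ i ∈ Finset.range (z + 1), genChoose ν (z - i) * (-1 : ℝ) ^ i = Ssum ν (z + 1) := by
    rw [Ssum]
    rfl
  have hA : ∑ i ∈ Finset.range (z + 1),
      (if i < z then (ν - ((z - 1 - i : ℕ) : ℝ)) * genChoose ν (z - 1 - i) * (-1 : ℝ) ^ i / ((i : ℝ) + 1) else 0)
      = (ν - z) * Fsum ν z + Ssum ν z := by
    rw [Finset.sum_range_succ, if_neg (lt_irrefl z), add_zero]
    have : ∀ i ∈ Finset.range z,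
        (if i < z then (ν - ((z - 1 - i : ℕ) : ℝ)) * genChoose ν (z - 1 - i) * (-1 : ℝ) ^ i / ((i : ℝ) + 1) else 0)
        = (ν - z) * (genChoose ν (z - 1 - i) * (-1 : ℝ) ^ i / ((i : ℝ) + 1))
          + genChoose ν (z - 1 - i) * (-1 : ℝ) ^ i := by
      intro i hi
      rw [Finset.mem_range] at hi
      rw [if_pos hi]
      have hc : ((z - 1 - i : ℕ) : ℝ) = (z : ℝ) - 1 - i := by
        rw [Nat.cast_sub (by omega), Nat.cast_sub (by omega)]
        push_cast; ring
      have hne : ((i : ℝ) + 1) ≠ 0 := by positivity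
      rw [hc]
      field_simp
      ring
    rw [Finset.sum_congr rfl this, Finset.sum_add_distrib, ← Finset.mul_sum, ← Fsum_range, Ssum]
  rw [hA, hS, Ssum_succ]
  ring

theorem binomial_harmonic_identity (z : ℕ) (hz : 1 ≤ z) (ν : ℝ) (hν : (z : ℝ) - 1 < ν) :
    ∑ m ∈ Finset.Icc 1 z, genChoose ν (z - m) * (-1 : ℝ) ^ (m - 1) / (m : ℝ) =
      genChoose ν z * ∑ i ∈ Finset.range z, 1 / (ν - (i : ℝ)) := by
  revert hν
  induction z, hz using Nat.le_induction with
  | base =>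
    intro hν
    have h0 : (0 : ℝ) < ν := by norm_num at hν; linarith
    simp [genChoose]
    field_simp
  | succ z hz ih =>
    intro hν
    have hzν : (z : ℝ) < ν := by push_cast at hν; linarith
    have ih' : Fsum ν z = genChoose ν z * ∑ i ∈ Finset.range z, 1 / (ν - (i : ℝ)) :=
      ih (by linarith)
    have hk := key ν z
    have hzp : ((z : ℝ) + 1) ≠ 0 := by positivity
    have hnz : ν - (z : ℝ) ≠ 0 := sub_ne_zero.mpr (ne_of_gt hzν)
    have hg := genChoose_succ ν z
    show Fsum ν (z + 1) = genChoose ν (z + 1) * ∑ i ∈ Finset.range (z + 1), 1 / (ν - (i : ℝ))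
    rw [Finset.sum_range_succ]
    have hF1 : Fsum ν (z + 1) = ((ν - z) * Fsum ν z + genChoose ν z) / ((z : ℝ) + 1) := by
      field_simp
      linarith [hk]
    have hg1 : genChoose ν (z + 1) = (ν - z) * genChoose ν z / ((z : ℝ) + 1) := by
      field_simp
      linarith [hg]
    rw [hF1, ih', hg1]
    field_simp
end

section
/- Fix k ∈ ℕ and a real r ≥ 0 with max{k,r} > 0. For every complex number z with cos(Im z) > 0, the ratio (Σ_{j=k}^n e^{z·j}·⌈n,j⌉_r·⦃j,k⦄_r / L(n,k)_r) / exp((k+r)·(log n)·(e^z - 1)) converges, as n → ∞, to Γ(k+2r)/Γ((k+r)e^z + r), where Γ denotes the complex Gamma function. (That is, the r-Lah distributions Lah(n,k)_r converge in the mod-Poisson sense with parameters λ_n = (k+r)·log n and limiting function Ψ(z) = Γ(k+2r)/Γ((k+r)e^z + r).) -/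
open Finset Filter MeasureTheory

lemma stirSec_eq_zero (r : ℝ) : ∀ j k, j < k → stirSec r j k = 0 := by
  intro j
  induction j with
  | zero => intro k hk; match k, hk with
            | k+1, _ => rfl
  | succ j ih =>
      intro k hk
      match k, hk with
      | k+1, hk =>
        show ((k : ℝ) + 1 + r) * stirSec r j (k + 1) + stirSec r j k = 0
        rw [ih (k+1) (by omega), ih k (by omega)]; ring

lemma stirFir_eq_zero (r : ℝ) : ∀ n j, n < j → stirFir r n j = 0 := by
  intro n
  induction n with
  | zero => intro j hj; match j, hj with
            | j+1, _ => rfl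
  | succ n ih =>
      intro j hj
      match j, hj with
      | j+1, hj =>
        show ((n : ℝ) + r) * stirFir r n (j + 1) + stirFir r n j = 0
        rw [ih (j+1) (by omega), ih j (by omega)]; ring

noncomputable def Qp (c : ℂ) (n : ℕ) : ℂ := ∏ t ∈ Finset.range n, (c + t)

noncomputable def Sg (r : ℝ) (x : ℂ) (n k : ℕ) : ℂ :=
  ∑ j ∈ Finset.range (n+1), x^j * ((stirFir r n j : ℝ) : ℂ) * ((stirSec r j k : ℝ) : ℂ)

noncomputable def Tg (r : ℝ) (x : ℂ) (n k : ℕ) : ℂ :=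
  ∑ j ∈ Finset.range (k+1),
    ((-1)^(k-j) / ((j.factorial : ℂ) * ((k-j).factorial : ℂ))) * Qp ((r : ℂ) + ((j : ℂ)+r)*x) n

lemma Sg_succ (r : ℝ) (x : ℂ) (n k : ℕ) :
    Sg r x (n+1) k = ((n : ℂ) + r) * Sg r x n k
      + ∑ j ∈ Finset.range (n+1), x^(j+1) * ((stirFir r n j : ℝ) : ℂ) * ((stirSec r (j+1) k : ℝ) : ℂ) := by
  rw [Sg, Finset.sum_range_succ']
  have h0 : (x^0 * ((stirFir r (n+1) 0 : ℝ) : ℂ) * ((stirSec r 0 k : ℝ) : ℂ))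
      = ((n : ℂ) + r) * (x^0 * ((stirFir r n 0 : ℝ) : ℂ) * ((stirSec r 0 k : ℝ) : ℂ)) := by
    show x ^ 0 * ((((n:ℝ) + r) * stirFir r n 0 : ℝ) : ℂ) * _ = _
    push_cast; ring
  rw [h0]
  have h1 : ∀ j ∈ Finset.range (n+1),
      x^(j+1) * ((stirFir r (n+1) (j+1) : ℝ) : ℂ) * ((stirSec r (j+1) k : ℝ) : ℂ)
      = ((n:ℂ)+r) * (x^(j+1) * ((stirFir r n (j+1) : ℝ) : ℂ) * ((stirSec r (j+1) k : ℝ) : ℂ))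
        + x^(j+1) * ((stirFir r n j : ℝ) : ℂ) * ((stirSec r (j+1) k : ℝ) : ℂ) := by
    intro j _
    show x ^ (j+1) * ((((n:ℝ) + r) * stirFir r n (j+1) + stirFir r n j : ℝ) : ℂ) * _ = _
    push_cast; ring
  rw [Finset.sum_congr rfl h1, Finset.sum_add_distrib]
  have key : (∑ j ∈ Finset.range (n+1), x^(j+1) * ((stirFir r n (j+1) : ℝ) : ℂ) * ((stirSec r (j+1) k : ℝ) : ℂ))
      + x^0 * ((stirFir r n 0 : ℝ) : ℂ) * ((stirSec r 0 k : ℝ) : ℂ)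
      = ∑ j ∈ Finset.range (n+1), x^j * ((stirFir r n j : ℝ) : ℂ) * ((stirSec r j k : ℝ) : ℂ) := by
    rw [← Finset.sum_range_succ' (fun j => x^j * ((stirFir r n j : ℝ) : ℂ) * ((stirSec r j k : ℝ) : ℂ)) (n+1),
      Finset.sum_range_succ (fun j => x^j * ((stirFir r n j : ℝ) : ℂ) * ((stirSec r j k : ℝ) : ℂ)) (n+1),
      stirFir_eq_zero r n (n+1) (by omega)]
    push_cast; ring
  rw [Sg, ← key, mul_add, Finset.mul_sum]
  ring

lemma Sg_succ_zero (r : ℝ) (x : ℂ) (n : ℕ) :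
    Sg r x (n+1) 0 = ((n : ℂ) + r + r * x) * Sg r x n 0 := by
  rw [Sg_succ]
  have h1 : ∀ j ∈ Finset.range (n+1),
      x^(j+1) * ((stirFir r n j : ℝ) : ℂ) * ((stirSec r (j+1) 0 : ℝ) : ℂ)
      = (r * x) * (x^j * ((stirFir r n j : ℝ) : ℂ) * ((stirSec r j 0 : ℝ) : ℂ)) := by
    intro j _
    show x ^ (j+1) * _ * ((r * stirSec r j 0 : ℝ) : ℂ) = _
    push_cast; ring
  rw [Finset.sum_congr rfl h1, ← Finset.mul_sum, Sg]
  ring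

lemma Sg_succ_succ (r : ℝ) (x : ℂ) (n k : ℕ) :
    Sg r x (n+1) (k+1) = ((n : ℂ) + r + ((k : ℂ) + 1 + r) * x) * Sg r x n (k+1)
      + x * Sg r x n k := by
  rw [Sg_succ]
  have h1 : ∀ j ∈ Finset.range (n+1),
      x^(j+1) * ((stirFir r n j : ℝ) : ℂ) * ((stirSec r (j+1) (k+1) : ℝ) : ℂ)
      = (((k : ℂ) + 1 + r) * x) * (x^j * ((stirFir r n j : ℝ) : ℂ) * ((stirSec r j (k+1) : ℝ) : ℂ))
        + x * (x^j * ((stirFir r n j : ℝ) : ℂ) * ((stirSec r j k : ℝ) : ℂ)) := by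
    intro j _
    show x ^ (j+1) * _ * ((((k:ℝ) + 1 + r) * stirSec r j (k+1) + stirSec r j k : ℝ) : ℂ) = _
    push_cast; ring
  rw [Finset.sum_congr rfl h1, Finset.sum_add_distrib, ← Finset.mul_sum, ← Finset.mul_sum, Sg, Sg]
  ring

lemma Sg_zero (r : ℝ) (x : ℂ) (k : ℕ) :
    Sg r x 0 k = if k = 0 then 1 else 0 := by
  rw [Sg, Finset.sum_range_one]
  cases k <;> simp [stirFir, stirSec]

lemma Tg_zero (r : ℝ) (x : ℂ) (k : ℕ) :
    Tg r x 0 k = if k = 0 then 1 else 0 := by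
  rw [Tg]
  simp only [Qp, Finset.range_zero, Finset.prod_empty, mul_one]
  have h := add_pow (1 : ℂ) (-1) k
  simp only [one_pow, one_mul] at h
  have h2 : ((1 : ℂ) + (-1)) ^ k = if k = 0 then 1 else 0 := by
    rw [add_neg_cancel]
    match k with
    | 0 => simp
    | k+1 => simp [zero_pow]
  rw [h2] at h
  have h3 : ∀ j ∈ Finset.range (k+1),
      ((-1:ℂ))^(k-j) / ((j.factorial : ℂ) * ((k-j).factorial : ℂ))
      = ((k.factorial : ℂ))⁻¹ * ((-1)^(k-j) * (k.choose j : ℂ)) := by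
    intro j hj
    have hjk : j ≤ k := by simpa using Nat.lt_succ_iff.mp (Finset.mem_range.mp hj)
    have hfac : (k.choose j) * j.factorial * (k-j).factorial = k.factorial :=
      Nat.choose_mul_factorial_mul_factorial hjk
    have : ((k.choose j : ℂ)) * (j.factorial : ℂ) * ((k-j).factorial : ℂ) = (k.factorial : ℂ) := by
      exact_mod_cast congrArg (Nat.cast : ℕ → ℂ) hfac
    have hj1 : (j.factorial : ℂ) ≠ 0 := Nat.cast_ne_zero.mpr j.factorial_ne_zero
    have hj2 : ((k-j).factorial : ℂ) ≠ 0 := Nat.cast_ne_zero.mpr (k-j).factorial_ne_zero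
    have hk1 : (k.factorial : ℂ) ≠ 0 := Nat.cast_ne_zero.mpr k.factorial_ne_zero
    field_simp [hj1, hj2, hk1]
    linear_combination (-1:ℂ) * this
  rw [Finset.sum_congr rfl h3, ← Finset.mul_sum, ← h]
  simp [Finset.mul_sum]
  split <;> simp [*]

lemma Tg_succ_zero (r : ℝ) (x : ℂ) (n : ℕ) :
    Tg r x (n+1) 0 = ((n : ℂ) + r + r * x) * Tg r x n 0 := by
  rw [Tg, Tg, Finset.sum_range_one, Finset.sum_range_one, Qp, Qp, Finset.prod_range_succ]
  push_cast
  ring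

lemma coeff_id (k j : ℕ) (hjk : j ≤ k) :
    ((-1:ℂ))^(k+1-j) / ((j.factorial : ℂ) * ((k+1-j).factorial : ℂ)) * ((j:ℂ) - ((k:ℂ)+1))
      = (-1)^(k-j) / ((j.factorial : ℂ) * ((k-j).factorial : ℂ)) := by
  have h1 : k+1-j = (k-j)+1 := by omega
  have hc : ((k - j : ℕ) : ℂ) = (k : ℂ) - (j : ℂ) := Nat.cast_sub hjk
  have h2 : ((j:ℂ) - ((k:ℂ)+1)) = -(((k-j : ℕ):ℂ)+1) := by rw [hc]; ring
  rw [h1, pow_succ, Nat.factorial_succ, h2]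
  have hj1 : (j.factorial : ℂ) ≠ 0 := Nat.cast_ne_zero.mpr j.factorial_ne_zero
  have hj2 : ((k-j).factorial : ℂ) ≠ 0 := Nat.cast_ne_zero.mpr (k-j).factorial_ne_zero
  have hj3 : ((k-j : ℕ) : ℂ) + 1 ≠ 0 := by
    intro hcon
    have : ((k-j : ℕ) : ℂ) + 1 = ((k-j+1 : ℕ) : ℂ) := by push_cast; ring
    rw [this] at hcon
    exact (Nat.cast_ne_zero (R := ℂ)).mpr (by omega) hcon
  rw [Nat.cast_mul, Nat.cast_add, Nat.cast_one, div_mul_eq_mul_div,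
    div_eq_div_iff (mul_ne_zero hj1 (mul_ne_zero hj3 hj2)) (mul_ne_zero hj1 hj2)]
  ring

lemma Tg_succ_succ (r : ℝ) (x : ℂ) (n k : ℕ) :
    Tg r x (n+1) (k+1) = ((n : ℂ) + r + ((k : ℂ) + 1 + r) * x) * Tg r x n (k+1)
      + x * Tg r x n k := by
  have hterm : ∀ j ∈ Finset.range (k+1+1),
      ((-1:ℂ))^(k+1-j) / ((j.factorial : ℂ) * ((k+1-j).factorial : ℂ)) * Qp ((r : ℂ) + ((j : ℂ)+r)*x) (n+1)
      = ((n : ℂ) + r + ((k : ℂ) + 1 + r) * x) *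
          (((-1:ℂ))^(k+1-j) / ((j.factorial : ℂ) * ((k+1-j).factorial : ℂ)) * Qp ((r : ℂ) + ((j : ℂ)+r)*x) n)
        + x * ((((-1:ℂ))^(k+1-j) / ((j.factorial : ℂ) * ((k+1-j).factorial : ℂ)) * ((j:ℂ) - ((k:ℂ)+1))) * Qp ((r : ℂ) + ((j : ℂ)+r)*x) n) := by
    intro j _
    rw [Qp, Finset.prod_range_succ, ← Qp]
    ring
  rw [Tg, Finset.sum_congr rfl hterm, Finset.sum_add_distrib, ← Finset.mul_sum, ← Finset.mul_sum]
  have e2 : (∑ j ∈ Finset.range (k+1+1),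
      (((-1:ℂ))^(k+1-j) / ((j.factorial : ℂ) * ((k+1-j).factorial : ℂ)) * ((j:ℂ) - ((k:ℂ)+1))) * Qp ((r : ℂ) + ((j : ℂ)+r)*x) n)
      = Tg r x n k := by
    rw [Finset.sum_range_succ]
    have hz : (((k+1:ℕ)):ℂ) - ((k:ℂ)+1) = 0 := by push_cast; ring
    rw [hz, mul_zero, zero_mul, add_zero]
    rw [Finset.sum_congr rfl (fun j hj => by
      rw [coeff_id k j (Nat.lt_succ_iff.mp (Finset.mem_range.mp hj))])]
    rw [Tg]
  rw [e2, Tg, Tg]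

lemma Sg_eq_Tg (r : ℝ) (x : ℂ) : ∀ n k, Sg r x n k = Tg r x n k := by
  intro n
  induction n with
  | zero => intro k; rw [Sg_zero, Tg_zero]
  | succ n ih =>
      intro k
      cases k with
      | zero => rw [Sg_succ_zero, Tg_succ_zero, ih 0]
      | succ k => rw [Sg_succ_succ, Tg_succ_succ, ih (k+1), ih k]

noncomputable def Nf (w : ℂ) (n : ℕ) : ℂ := Complex.exp ((Real.log n : ℂ) * w)

lemma Nf_ne_zero (w : ℂ) (n : ℕ) : Nf w n ≠ 0 := Complex.exp_ne_zero _

lemma cpow_eq_Nf {n : ℕ} (hn : 1 ≤ n) (w : ℂ) : (n : ℂ) ^ w = Nf w n := by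
  rw [Complex.cpow_def_of_ne_zero (Nat.cast_ne_zero.mpr (by omega)), Nf, Complex.natCast_log]

lemma Qp_ne_zero {c : ℂ} (hc : 0 < c.re) (n : ℕ) : Qp c n ≠ 0 := by
  rw [Qp, Finset.prod_ne_zero_iff]
  intro t _ h
  have h2 : (c + (t : ℂ)).re = c.re + t := by simp
  rw [h] at h2
  simp at h2
  have : (0:ℝ) ≤ (t : ℝ) := by positivity
  linarith

lemma key_eq (a b : ℂ) {n : ℕ} (hn : 1 ≤ n) (han : Qp a (n+1) ≠ 0) (hbn : Qp b (n+1) ≠ 0) :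
    Qp a (n+1) / Qp b (n+1) / Nf (a-b) n = Complex.GammaSeq b n / Complex.GammaSeq a n := by
  rw [Complex.GammaSeq, Complex.GammaSeq,
    show (∏ j ∈ Finset.range (n+1), (a + (j:ℂ))) = Qp a (n+1) from rfl,
    show (∏ j ∈ Finset.range (n+1), (b + (j:ℂ))) = Qp b (n+1) from rfl,
    cpow_eq_Nf hn a, cpow_eq_Nf hn b,
    show Nf (a-b) n = Nf a n / Nf b n by rw [Nf, Nf, Nf, mul_sub, Complex.exp_sub]]
  have hfac : ((n.factorial : ℂ)) ≠ 0 := Nat.cast_ne_zero.mpr n.factorial_ne_zero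
  have hNa := Nf_ne_zero a n
  have hNb := Nf_ne_zero b n
  field_simp

lemma tendsto_main {a b : ℂ} (ha : 0 < a.re) (hb : 0 < b.re) :
    Filter.Tendsto (fun n : ℕ => Qp a (n+1) / Qp b (n+1) / Nf (a-b) n) Filter.atTop
      (nhds (Complex.Gamma b / Complex.Gamma a)) := by
  have hGa : Complex.Gamma a ≠ 0 := Complex.Gamma_ne_zero_of_re_pos ha
  have h := (Complex.GammaSeq_tendsto_Gamma b).div (Complex.GammaSeq_tendsto_Gamma a) hGa
  apply h.congr'
  filter_upwards [Filter.eventually_ge_atTop 1] with n hn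
  exact (key_eq a b hn (Qp_ne_zero ha (n+1)) (Qp_ne_zero hb (n+1))).symm

lemma tendsto_Nf_zero {w : ℂ} (hw : w.re < 0) :
    Filter.Tendsto (fun n : ℕ => Nf w n) Filter.atTop (nhds 0) := by
  rw [tendsto_zero_iff_norm_tendsto_zero]
  have h1 : Filter.Tendsto (fun n : ℕ => Real.log n) Filter.atTop Filter.atTop :=
    Real.tendsto_log_atTop.comp tendsto_natCast_atTop_atTop
  have h2 := (h1.atTop_mul_const_of_neg hw)
  have h3 := Real.tendsto_exp_atBot.comp h2
  apply h3.congr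
  intro n
  show Real.exp (Real.log (n:ℕ) * w.re) = ‖Nf w n‖
  rw [Nf, Complex.norm_exp]
  congr 1
  rw [Complex.mul_re, Complex.ofReal_re, Complex.ofReal_im]
  ring

lemma tendsto_Qp_ratio_zero {c d : ℂ} (hc : c = 0 ∨ 0 < c.re) (hd : 0 < d.re)
    (hcd : c.re < d.re) :
    Filter.Tendsto (fun n : ℕ => Qp c (n+1) / Qp d (n+1)) Filter.atTop (nhds 0) := by
  rcases hc with hc0 | hcpos
  · have hz : ∀ n : ℕ, Qp c (n+1) = 0 := by
      intro n
      rw [hc0, Qp]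
      exact Finset.prod_eq_zero (Finset.mem_range.mpr (by omega) : 0 ∈ Finset.range (n+1)) (by simp)
    apply Filter.Tendsto.congr (fun n => by rw [hz n, zero_div]) tendsto_const_nhds
  · have hGc : Complex.Gamma c ≠ 0 := Complex.Gamma_ne_zero_of_re_pos hcpos
    have hGS := (Complex.GammaSeq_tendsto_Gamma d).div (Complex.GammaSeq_tendsto_Gamma c) hGc
    have hNf : Filter.Tendsto (fun n : ℕ => Nf (c - d) n) Filter.atTop (nhds 0) :=
      tendsto_Nf_zero (by simp [Complex.sub_re]; linarith)
    have := hGS.mul hNf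
    rw [mul_zero] at this
    apply this.congr'
    filter_upwards [Filter.eventually_ge_atTop 1] with n hn
    have hkey := key_eq c d hn (Qp_ne_zero hcpos (n+1)) (Qp_ne_zero hd (n+1))
    rw [div_eq_iff (Nf_ne_zero _ _)] at hkey
    simp only [Pi.div_apply]
    rw [← hkey]

lemma tendsto_Nf_ratio (w : ℂ) :
    Filter.Tendsto (fun n : ℕ => Nf w (n+1) / Nf w n) Filter.atTop (nhds 1) := by
  have ha : Filter.Tendsto (fun n : ℕ => ((n:ℝ)+1)/n) Filter.atTop (nhds 1) := by
    have h2 := (tendsto_const_nhds : Filter.Tendsto (fun _ : ℕ => (1:ℝ)) Filter.atTop (nhds 1)).add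
      tendsto_one_div_atTop_nhds_zero_nat
    rw [add_zero] at h2
    apply h2.congr'
    filter_upwards [Filter.eventually_ge_atTop 1] with n hn
    have hn0 : (n:ℝ) ≠ 0 := Nat.cast_ne_zero.mpr (by omega)
    field_simp
  have hb := (Real.continuousAt_log one_ne_zero).tendsto.comp ha
  rw [Real.log_one] at hb
  have hlog : Filter.Tendsto (fun n : ℕ => Real.log (↑(n+1) : ℝ) - Real.log n) Filter.atTop (nhds 0) := by
    apply hb.congr'
    filter_upwards [Filter.eventually_ge_atTop 1] with n hn
    have hn0 : (n:ℝ) ≠ 0 := Nat.cast_ne_zero.mpr (by omega)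
    show Real.log (((n:ℝ)+1)/n) = _
    rw [Real.log_div (by linarith [Nat.cast_nonneg (α := ℝ) n]) hn0]
    push_cast
    ring
  have hC : Filter.Tendsto (fun n : ℕ => ((Real.log (↑(n+1) : ℝ) - Real.log n : ℝ) : ℂ))
      Filter.atTop (nhds 0) := by
    have h := (Complex.continuous_ofReal.tendsto (0:ℝ)).comp hlog
    rw [Complex.ofReal_zero] at h
    exact h
  have hC2 := hC.mul_const w
  rw [zero_mul] at hC2
  have hE := (Complex.continuous_exp.tendsto 0).comp hC2
  rw [Complex.exp_zero] at hE
  apply hE.congr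
  intro n
  show Complex.exp _ = _
  rw [Nf, Nf, ← Complex.exp_sub, ← sub_mul, ← Complex.ofReal_sub]

lemma tendsto_Tg_div (r : ℝ) (hr : 0 ≤ r) (k : ℕ) (x : ℂ) (hx : 0 < x.re)
    (hmax : 0 < k ∨ 0 < r) :
    Filter.Tendsto (fun n : ℕ => Tg r x (n+1) k / Qp ((r:ℂ) + ((k:ℂ)+r)*x) (n+1))
      Filter.atTop (nhds (1/(k.factorial : ℂ))) := by
  have hre : ∀ j : ℕ, ((r:ℂ) + ((j:ℂ)+r)*x).re = r + ((j:ℝ)+r)*x.re := by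
    intro j
    simp [Complex.add_re, Complex.mul_re]
  have hkr : 0 < (k:ℝ) + r := by
    rcases hmax with h|h
    · have : (1:ℝ) ≤ k := Nat.one_le_cast.mpr h
      linarith
    · linarith [Nat.cast_nonneg (α := ℝ) k]
  have hAk : 0 < ((r:ℂ) + ((k:ℂ)+r)*x).re := by
    rw [hre]
    nlinarith [mul_pos hkr hx]
  have hfun : ∀ n : ℕ, Tg r x (n+1) k / Qp ((r:ℂ) + ((k:ℂ)+r)*x) (n+1)
      = ∑ j ∈ Finset.range (k+1), ((-1:ℂ))^(k-j) / ((j.factorial : ℂ) * ((k-j).factorial : ℂ))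
          * (Qp ((r:ℂ) + ((j:ℂ)+r)*x) (n+1) / Qp ((r:ℂ) + ((k:ℂ)+r)*x) (n+1)) := by
    intro n
    rw [Tg, Finset.sum_div]
    exact Finset.sum_congr rfl (fun j _ => mul_div_assoc _ _ _)
  have hlim : Filter.Tendsto (fun n : ℕ => ∑ j ∈ Finset.range (k+1),
      ((-1:ℂ))^(k-j) / ((j.factorial : ℂ) * ((k-j).factorial : ℂ))
        * (Qp ((r:ℂ) + ((j:ℂ)+r)*x) (n+1) / Qp ((r:ℂ) + ((k:ℂ)+r)*x) (n+1)))
      Filter.atTop (nhds (∑ j ∈ Finset.range (k+1),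
        if j = k then (1:ℂ)/(k.factorial : ℂ) else 0)) := by
    apply tendsto_finset_sum
    intro j hj
    by_cases hjk : j = k
    · subst hjk
      rw [if_pos rfl]
      have hval : ((-1:ℂ))^(j-j) / ((j.factorial : ℂ) * ((j-j).factorial : ℂ)) = 1/(j.factorial:ℂ) := by
        simp [Nat.sub_self, Nat.factorial]
      have hconst : Filter.Tendsto (fun _ : ℕ => ((-1:ℂ))^(j-j) / ((j.factorial : ℂ) * ((j-j).factorial : ℂ)))
          Filter.atTop (nhds (1/(j.factorial:ℂ))) := by
        rw [hval]; exact tendsto_const_nhds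
      apply hconst.congr
      intro n
      rw [div_self (Qp_ne_zero hAk (n+1)), mul_one]
    · have hjlt : j < k := lt_of_le_of_ne (Nat.lt_succ_iff.mp (Finset.mem_range.mp hj)) hjk
      rw [if_neg hjk]
      have hclt : ((r:ℂ) + ((j:ℂ)+r)*x).re < ((r:ℂ) + ((k:ℂ)+r)*x).re := by
        rw [hre, hre]
        have hjk' : (j:ℝ) < k := Nat.cast_lt.mpr hjlt
        nlinarith
      have hc : ((r:ℂ) + ((j:ℂ)+r)*x) = 0 ∨ 0 < ((r:ℂ) + ((j:ℂ)+r)*x).re := by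
        rcases Nat.eq_zero_or_pos j with hj0 | hjpos
        · subst hj0
          rcases eq_or_lt_of_le hr with hr0 | hrpos
          · left
            rw [← hr0]
            simp
          · right
            rw [hre]
            nlinarith
        · right
          rw [hre]
          have : (1:ℝ) ≤ j := Nat.one_le_cast.mpr hjpos
          nlinarith
      have h0 := tendsto_Qp_ratio_zero hc hAk hclt
      have h1 := h0.const_mul (((-1:ℂ))^(k-j) / ((j.factorial : ℂ) * ((k-j).factorial : ℂ)))
      rw [mul_zero] at h1
      exact h1
  rw [Finset.sum_ite_eq' (Finset.range (k+1)) k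
    (fun _ => (1:ℂ)/(k.factorial : ℂ)), if_pos (Finset.self_mem_range_succ k)] at hlim
  exact hlim.congr (fun n => (hfun n).symm)

theorem rLah_mod_poisson (k : ℕ) (r : ℝ) (hr : 0 ≤ r) (hmax : 0 < k ∨ 0 < r)
    (z : ℂ) (hz : 0 < Real.cos z.im) :
    Tendsto (fun n : ℕ =>
        ((∑ j ∈ Finset.Icc k n,
            Complex.exp (z * (j : ℂ)) * ((stirFir r n j * stirSec r j k : ℝ) : ℂ)) /
          ((lahNum r n k : ℝ) : ℂ)) /
        Complex.exp ((((k : ℝ) + r) * Real.log n : ℝ) * (Complex.exp z - 1)))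
      atTop
      (nhds (Complex.Gamma (((k : ℝ) + 2 * r : ℝ) : ℂ) /
        Complex.Gamma ((((k : ℝ) + r : ℝ) : ℂ) * Complex.exp z + ((r : ℝ) : ℂ)))) := by
  set x := Complex.exp z with hxdef
  have hx : 0 < x.re := by
    rw [hxdef, Complex.exp_re]
    exact mul_pos (Real.exp_pos _) hz
  set A := (r:ℂ) + ((k:ℂ)+r)*x with hA
  set B := (r:ℂ) + ((k:ℂ)+r)*(1:ℂ) with hB
  have hkr : 0 < (k:ℝ) + r := by
    rcases hmax with h|h
    · have : (1:ℝ) ≤ k := Nat.one_le_cast.mpr h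
      linarith
    · linarith [Nat.cast_nonneg (α := ℝ) k]
  have hApos : 0 < A.re := by
    rw [hA]
    have : ((r:ℂ) + ((k:ℂ)+r)*x).re = r + ((k:ℝ)+r)*x.re := by
      simp [Complex.add_re, Complex.mul_re]
    rw [this]
    nlinarith [mul_pos hkr hx]
  have hBpos : 0 < B.re := by
    rw [hB]
    have : ((r:ℂ) + ((k:ℂ)+r)*(1:ℂ)).re = r + ((k:ℝ)+r) := by
      simp [Complex.add_re, Complex.mul_re]
    rw [this]
    linarith
  have h1 := tendsto_Tg_div r hr k x hx hmax
  have h2 := tendsto_Tg_div r hr k 1 (by norm_num) hmax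
  have h3 := tendsto_main hApos hBpos
  have h4 := tendsto_Nf_ratio (A - B)
  have hden : (1:ℂ)/(k.factorial:ℂ) ≠ 0 :=
    one_div_ne_zero (Nat.cast_ne_zero.mpr k.factorial_ne_zero)
  have hcomb := (h1.div h2 hden).mul (h3.div h4 one_ne_zero)
  have hval : ((1:ℂ)/(k.factorial:ℂ))/((1:ℂ)/(k.factorial:ℂ))
      * ((Complex.Gamma B/Complex.Gamma A)/1) = Complex.Gamma B/Complex.Gamma A := by
    rw [div_self hden, div_one, one_mul]
  rw [hval] at hcomb
  have htarget : Complex.Gamma B / Complex.Gamma A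
      = Complex.Gamma (((k:ℝ)+2*r :ℝ):ℂ) / Complex.Gamma ((((k:ℝ)+r:ℝ):ℂ) * x + ((r:ℝ):ℂ)) := by
    congr 1
    · congr 1
      rw [hB]
      push_cast
      ring
    · congr 1
      rw [hA]
      push_cast
      ring
  rw [← Filter.tendsto_add_atTop_iff_nat 1, ← htarget]
  refine hcomb.congr' (Filter.Eventually.of_forall fun n => ?_)
  have hQA := Qp_ne_zero hApos (n+1)
  have hQB := Qp_ne_zero hBpos (n+1)
  have hN1 := Nf_ne_zero (A-B) n
  have hN2 := Nf_ne_zero (A-B) (n+1)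
  have hsub : Finset.Icc k (n+1) ⊆ Finset.range (n+1+1) := by
    intro j hj
    have := (Finset.mem_Icc.mp hj).2
    exact Finset.mem_range.mpr (by omega)
  have e1 : (∑ j ∈ Finset.Icc k (n+1),
      Complex.exp (z*(j:ℂ)) * ((stirFir r (n+1) j * stirSec r j k : ℝ):ℂ)) = Tg r x (n+1) k := by
    rw [← Sg_eq_Tg, Sg]
    have hfg : ∀ j : ℕ, Complex.exp (z*(j:ℂ)) * ((stirFir r (n+1) j * stirSec r j k : ℝ):ℂ)
        = x^j * ((stirFir r (n+1) j : ℝ):ℂ) * ((stirSec r j k : ℝ):ℂ) := by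
      intro j
      rw [mul_comm z (j:ℂ), Complex.exp_nat_mul, ← hxdef, Complex.ofReal_mul]
      ring
    rw [Finset.sum_congr rfl (fun j _ => hfg j)]
    apply Finset.sum_subset hsub
    intro j hjr hjn
    have hjlt : j < k := by
      have h2 := Finset.mem_range.mp hjr
      by_contra hcon
      exact hjn (Finset.mem_Icc.mpr ⟨by omega, by omega⟩)
    rw [stirSec_eq_zero r j k hjlt]
    simp
  have e2 : ((lahNum r (n+1) k : ℝ):ℂ) = Tg r 1 (n+1) k := by
    rw [← Sg_eq_Tg, Sg, lahNum]
    push_cast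
    have : ∀ j ∈ Finset.range (n+1+1),
        (1:ℂ)^j * ((stirFir r (n+1) j : ℝ):ℂ) * ((stirSec r j k : ℝ):ℂ)
        = ((stirFir r (n+1) j : ℝ):ℂ) * ((stirSec r j k : ℝ):ℂ) := by
      intro j _
      rw [one_pow, one_mul]
    rw [Finset.sum_congr rfl this]
    apply Finset.sum_subset hsub
    intro j hjr hjn
    have hjlt : j < k := by
      have h2 := Finset.mem_range.mp hjr
      by_contra hcon
      exact hjn (Finset.mem_Icc.mpr ⟨by omega, by omega⟩)
    rw [stirSec_eq_zero r j k hjlt]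
    simp
  have e3 : Complex.exp (((((k:ℝ)+r) * Real.log (↑(n+1):ℝ) :ℝ):ℂ) * (x - 1)) = Nf (A-B) (n+1) := by
    rw [Nf]
    congr 1
    rw [hA, hB]
    push_cast
    ring
  show (Tg r x (n+1) k / Qp A (n+1)) / (Tg r 1 (n+1) k / Qp B (n+1))
      * ((Qp A (n+1)/Qp B (n+1)/Nf (A-B) n) / (Nf (A-B) (n+1)/Nf (A-B) n))
    = ((∑ j ∈ Finset.Icc k (n+1),
          Complex.exp (z * (j : ℂ)) * ((stirFir r (n+1) j * stirSec r j k : ℝ) : ℂ)) /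
        ((lahNum r (n+1) k : ℝ) : ℂ)) /
      Complex.exp (((((k : ℝ) + r) * Real.log (↑(n+1) : ℝ)) : ℝ) * (x - 1))
  rw [e1, e2, e3]
  by_cases hT : Tg r 1 (n+1) k = 0
  · rw [hT]
    simp
  · field_simp
end

section
/- For any admissible triple of parameters (n,k,r), the r-Lah distribution is log-concave: for all i ∈ {k+1, ..., n-1}, P[Lah(n,k)_r = i]² ≥ P[Lah(n,k)_r = i-1]·P[Lah(n,k)_r = i+1]; equivalently, (⌈n,i⌉_r·⦃i,k⦄_r)² ≥ (⌈n,i-1⌉_r·⦃i-1,k⦄_r)·(⌈n,i+1⌉_r·⦃i+1,k⦄_r). -/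
open Finset Filter MeasureTheory

lemma stirFir_succ (r : ℝ) (n k : ℕ) :
    stirFir r (n+1) (k+1) = ((n:ℝ) + r) * stirFir r n (k+1) + stirFir r n k := rfl

lemma stirSec_succ (r : ℝ) (n k : ℕ) :
    stirSec r (n+1) (k+1) = ((k:ℝ) + 1 + r) * stirSec r n (k+1) + stirSec r n k := rfl

lemma stirFir_nonneg (r : ℝ) (hr : 0 ≤ r) : ∀ n k, 0 ≤ stirFir r n k := by
  intro n
  induction n with
  | zero => intro k; cases k with
    | zero => exact zero_le_one
    | succ k => exact le_of_eq rfl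
  | succ n ih =>
    intro k
    have hc : (0:ℝ) ≤ (n:ℝ) + r := add_nonneg (Nat.cast_nonneg n) hr
    cases k with
    | zero =>
      have e : stirFir r (n+1) 0 = ((n:ℝ)+r) * stirFir r n 0 := rfl
      rw [e]; exact mul_nonneg hc (ih 0)
    | succ k =>
      rw [stirFir_succ]
      exact add_nonneg (mul_nonneg hc (ih _)) (ih _)

lemma stirSec_nonneg (r : ℝ) (hr : 0 ≤ r) : ∀ n k, 0 ≤ stirSec r n k := by
  intro n
  induction n with
  | zero => intro k; cases k with
    | zero => exact zero_le_one
    | succ k => exact le_of_eq rfl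
  | succ n ih =>
    intro k
    cases k with
    | zero =>
      have e : stirSec r (n+1) 0 = r * stirSec r n 0 := rfl
      rw [e]; exact mul_nonneg hr (ih 0)
    | succ k =>
      have hc : (0:ℝ) ≤ (k:ℝ) + 1 + r :=
        add_nonneg (add_nonneg (Nat.cast_nonneg k) zero_le_one) hr
      rw [stirSec_succ]
      exact add_nonneg (mul_nonneg hc (ih _)) (ih _)

lemma stirSec_zero_s13 (r : ℝ) : ∀ n, stirSec r n 0 = r ^ n := by
  intro n
  induction n with
  | zero => rfl
  | succ n ih =>
    have e : stirSec r (n+1) 0 = r * stirSec r n 0 := rfl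
    rw [e, ih, pow_succ]; ring

lemma stirFir_tp2 (r : ℝ) (hr : 0 ≤ r) :
    ∀ n j l, j ≤ l →
      stirFir r n j * stirFir r n (l+2) ≤ stirFir r n (j+1) * stirFir r n (l+1) := by
  intro n
  induction n with
  | zero =>
    intro j l _
    have h1 : stirFir r 0 (j+1) = 0 := rfl
    have h2 : stirFir r 0 (l+2) = 0 := rfl
    rw [h1, h2]; simp
  | succ n ih =>
    intro j l hjl
    have hc : (0:ℝ) ≤ (n:ℝ) + r := add_nonneg (Nat.cast_nonneg n) hr
    have A : ∀ m, 0 ≤ stirFir r n m := stirFir_nonneg r hr n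
    rcases j with _ | j'
    · have e0 : stirFir r (n+1) 0 = ((n:ℝ)+r) * stirFir r n 0 := rfl
      have e1 : stirFir r (n+1) 1 = ((n:ℝ)+r) * stirFir r n 1 + stirFir r n 0 := rfl
      have eL2 : stirFir r (n+1) (l+2) = ((n:ℝ)+r) * stirFir r n (l+2) + stirFir r n (l+1) := rfl
      have eL1 : stirFir r (n+1) (l+1) = ((n:ℝ)+r) * stirFir r n (l+1) + stirFir r n l := rfl
      have h1 : stirFir r n 0 * stirFir r n (l+2) ≤ stirFir r n 1 * stirFir r n (l+1) :=
        ih 0 l (Nat.zero_le l)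
      have h1' := mul_le_mul_of_nonneg_left h1 (mul_nonneg hc hc)
      show stirFir r (n+1) 0 * stirFir r (n+1) (l+2) ≤ stirFir r (n+1) 1 * stirFir r (n+1) (l+1)
      rw [e0, e1, eL2, eL1]
      nlinarith [h1', mul_nonneg hc (mul_nonneg (A 1) (A l)), mul_nonneg (A 0) (A l)]
    · obtain ⟨l', rfl⟩ : ∃ l', l = l'+1 := ⟨l-1, by omega⟩
      have hj'l' : j' ≤ l' := by omega
      have eJ1 : stirFir r (n+1) (j'+1) = ((n:ℝ)+r) * stirFir r n (j'+1) + stirFir r n j' := rfl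
      have eJ2 : stirFir r (n+1) (j'+2) = ((n:ℝ)+r) * stirFir r n (j'+2) + stirFir r n (j'+1) := rfl
      have eB3 : stirFir r (n+1) (l'+3) = ((n:ℝ)+r) * stirFir r n (l'+3) + stirFir r n (l'+2) := rfl
      have eB2 : stirFir r (n+1) (l'+2) = ((n:ℝ)+r) * stirFir r n (l'+2) + stirFir r n (l'+1) := rfl
      have t1 : stirFir r n (j'+1) * stirFir r n (l'+3) ≤ stirFir r n (j'+2) * stirFir r n (l'+2) :=
        ih (j'+1) (l'+1) (by omega)
      have t3 : stirFir r n j' * stirFir r n (l'+2) ≤ stirFir r n (j'+1) * stirFir r n (l'+1) :=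
        ih j' l' hj'l'
      have t2a : stirFir r n j' * stirFir r n (l'+3) ≤ stirFir r n (j'+1) * stirFir r n (l'+2) :=
        ih j' (l'+1) (by omega)
      have t2b : stirFir r n (j'+1) * stirFir r n (l'+2) ≤ stirFir r n (j'+2) * stirFir r n (l'+1) := by
        rcases eq_or_lt_of_le hj'l' with h | h
        · subst h; exact le_of_eq (mul_comm _ _)
        · exact ih (j'+1) l' h
      have t2 := t2a.trans t2b
      have h1' := mul_le_mul_of_nonneg_left t1 (mul_nonneg hc hc)
      have h2' := mul_le_mul_of_nonneg_left t2 hc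
      show stirFir r (n+1) (j'+1) * stirFir r (n+1) (l'+3) ≤
        stirFir r (n+1) (j'+2) * stirFir r (n+1) (l'+2)
      rw [eJ1, eJ2, eB3, eB2]
      nlinarith [h1', h2', t3]

lemma stirSec_tp2 (r : ℝ) (hr : 0 ≤ r) :
    ∀ k m n, m ≤ n →
      stirSec r m k * stirSec r (n+2) k ≤ stirSec r (m+1) k * stirSec r (n+1) k := by
  intro k
  induction k with
  | zero =>
    intro m n _
    apply le_of_eq
    rw [stirSec_zero_s13, stirSec_zero_s13, stirSec_zero_s13, stirSec_zero_s13, ← pow_add, ← pow_add]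
    congr 1; omega
  | succ k ihk =>
    have hx : (0:ℝ) ≤ (k:ℝ) + 1 + r :=
      add_nonneg (add_nonneg (Nat.cast_nonneg k) zero_le_one) hr
    have cross : ∀ m n, m ≤ n →
        stirSec r m (k+1) * stirSec r (n+1) k ≤ stirSec r (m+1) (k+1) * stirSec r n k := by
      intro m
      induction m with
      | zero =>
        intro n _
        have h0 : stirSec r 0 (k+1) = 0 := rfl
        rw [h0, zero_mul]
        exact mul_nonneg (stirSec_nonneg r hr _ _) (stirSec_nonneg r hr _ _)
      | succ m ihm =>
        intro n hmn
        obtain ⟨n', rfl⟩ : ∃ n', n = n'+1 := ⟨n-1, by omega⟩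
        have h1 : stirSec r m (k+1) * stirSec r (n'+2) k ≤
            stirSec r (m+1) (k+1) * stirSec r (n'+1) k := ihm (n'+1) (by omega)
        have h2 : stirSec r m k * stirSec r (n'+2) k ≤
            stirSec r (m+1) k * stirSec r (n'+1) k := ihk m n' (by omega)
        have e2 : stirSec r (m+2) (k+1) =
            ((k:ℝ)+1+r) * stirSec r (m+1) (k+1) + stirSec r (m+1) k := stirSec_succ r (m+1) k
        have e1' : stirSec r (m+1) (k+1) * stirSec r (n'+2) k =
            (((k:ℝ)+1+r) * stirSec r m (k+1) + stirSec r m k) * stirSec r (n'+2) k := by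
          rw [stirSec_succ]
        have hx1 := mul_le_mul_of_nonneg_left h1 hx
        show stirSec r (m+1) (k+1) * stirSec r (n'+2) k ≤
          stirSec r (m+2) (k+1) * stirSec r (n'+1) k
        rw [e2]
        nlinarith [hx1, h2, e1']
    have Qd : ∀ d m, stirSec r m (k+1) * stirSec r (m+d+2) (k+1) ≤
        stirSec r (m+1) (k+1) * stirSec r (m+d+1) (k+1) := by
      intro d
      induction d with
      | zero =>
        intro m
        have e2 : stirSec r (m+2) (k+1) =
            ((k:ℝ)+1+r) * stirSec r (m+1) (k+1) + stirSec r (m+1) k := stirSec_succ r (m+1) k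
        have e1' : stirSec r (m+1) (k+1) * stirSec r (m+1) (k+1) =
            (((k:ℝ)+1+r) * stirSec r m (k+1) + stirSec r m k) * stirSec r (m+1) (k+1) := by
          rw [stirSec_succ]
        have hC : stirSec r m (k+1) * stirSec r (m+1) k ≤
            stirSec r (m+1) (k+1) * stirSec r m k := cross m m le_rfl
        show stirSec r m (k+1) * stirSec r (m+2) (k+1) ≤
          stirSec r (m+1) (k+1) * stirSec r (m+1) (k+1)
        rw [e2]
        nlinarith [hC, e1']
      | succ d ihd =>
        intro m
        have h1 : stirSec r m (k+1) * stirSec r (m+d+2) (k+1) ≤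
            stirSec r (m+1) (k+1) * stirSec r (m+d+1) (k+1) := ihd m
        have hx1 := mul_le_mul_of_nonneg_left h1 hx
        have hC : stirSec r m (k+1) * stirSec r (m+d+2) k ≤
            stirSec r (m+1) (k+1) * stirSec r (m+d+1) k := cross m (m+d+1) (by omega)
        have es : stirSec r (m+d+2) (k+1) =
            ((k:ℝ)+1+r) * stirSec r (m+d+1) (k+1) + stirSec r (m+d+1) k :=
          stirSec_succ r (m+d+1) k
        have e2 : stirSec r (m+d+3) (k+1) =
            ((k:ℝ)+1+r) * stirSec r (m+d+2) (k+1) + stirSec r (m+d+2) k :=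
          stirSec_succ r (m+d+2) k
        have e1' : stirSec r (m+1) (k+1) * stirSec r (m+d+2) (k+1) =
            stirSec r (m+1) (k+1) *
              (((k:ℝ)+1+r) * stirSec r (m+d+1) (k+1) + stirSec r (m+d+1) k) := by
          rw [es]
        show stirSec r m (k+1) * stirSec r (m+d+3) (k+1) ≤
          stirSec r (m+1) (k+1) * stirSec r (m+d+2) (k+1)
        rw [e2]
        nlinarith [hx1, hC, e1']
    intro m n hmn
    obtain ⟨d, rfl⟩ : ∃ d, n = m + d := ⟨n-m, by omega⟩
    exact Qd d m

theorem rLah_log_concave (n k : ℕ) (r : ℝ) (hn : 1 ≤ n) (hk : k ≤ n) (hr : 0 ≤ r)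
    (hmax : 0 < k ∨ 0 < r) (i : ℕ) (hi1 : k + 1 ≤ i) (hi2 : i + 1 ≤ n) :
    lahPMF r n k (i - 1) * lahPMF r n k (i + 1) ≤ (lahPMF r n k i) ^ 2 := by
  obtain ⟨i', rfl⟩ : ∃ i', i = i'+1 := ⟨i-1, by omega⟩
  show lahPMF r n k i' * lahPMF r n k (i'+2) ≤ lahPMF r n k (i'+1) ^ 2
  have hF : stirFir r n i' * stirFir r n (i'+2) ≤ stirFir r n (i'+1) * stirFir r n (i'+1) :=
    stirFir_tp2 r hr n i' i' le_rfl
  have hS : stirSec r i' k * stirSec r (i'+2) k ≤ stirSec r (i'+1) k * stirSec r (i'+1) k :=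
    stirSec_tp2 r hr k i' i' le_rfl
  have FN : ∀ j, 0 ≤ stirFir r n j := stirFir_nonneg r hr n
  have SN : ∀ j, 0 ≤ stirSec r j k := fun j => stirSec_nonneg r hr j k
  have key : (stirFir r n i' * stirSec r i' k) * (stirFir r n (i'+2) * stirSec r (i'+2) k) ≤
      (stirFir r n (i'+1) * stirSec r (i'+1) k) ^ 2 := by
    have h := mul_le_mul hF hS (mul_nonneg (SN i') (SN (i'+2)))
      (mul_nonneg (FN (i'+1)) (FN (i'+1)))
    nlinarith [h]
  have h2 : (0:ℝ) ≤ (1 / lahNum r n k) ^ 2 := by positivity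
  calc lahPMF r n k i' * lahPMF r n k (i'+2)
      = ((stirFir r n i' * stirSec r i' k) * (stirFir r n (i'+2) * stirSec r (i'+2) k)) *
          (1 / lahNum r n k) ^ 2 := by
        simp only [lahPMF]; ring
    _ ≤ ((stirFir r n (i'+1) * stirSec r (i'+1) k) ^ 2) * (1 / lahNum r n k) ^ 2 :=
        mul_le_mul_of_nonneg_right key h2
    _ = lahPMF r n k (i'+1) ^ 2 := by
        simp only [lahPMF]; ring
end

section
/- Weak threshold: fix k ∈ ℕ, and let n : ℕ → ℕ satisfy n(d) ≥ d for all d and log(n(d))/d → γ ∈ [0,∞] as d → ∞. Define, for d > k, F(d) := 2·Σ_{l ≥ 0, d-1-2l ≥ k} P[Lah(n(d),k)_{1/2} = d-1-2l], where Lah(n,k)_{1/2} is the r-Lah distribution with r = 1/2 (this quantity equals the ratio E[f_k(C_n^B)]/C(n,k) of the expected number of k-faces of the Weyl random cone of type B+ to its maximal value). Then F(d) → 1 as d → ∞ if γ < 1/(k + 1/2), and F(d) → 0 as d → ∞ if γ > 1/(k + 1/2). -/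
open Finset Filter MeasureTheory

lemma sF_nonneg (n j : ℕ) : 0 ≤ stirFir (1/2) n j := by
  induction n generalizing j with
  | zero => cases j <;> simp [stirFir]
  | succ n ih =>
    cases j with
    | zero => rw [stirFir]; have := ih 0; positivity
    | succ j =>
      rw [stirFir]
      have h1 := ih (j+1); have h2 := ih j
      positivity

lemma sS_nonneg (j k : ℕ) : 0 ≤ stirSec (1/2) j k := by
  induction j generalizing k with
  | zero => cases k <;> simp [stirSec]
  | succ j ih =>
    cases k with
    | zero => rw [stirSec]; have := ih 0; positivity
    | succ k =>
      rw [stirSec]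
      have h1 := ih (k+1); have h2 := ih k
      positivity

lemma sF_eq_zero {n j : ℕ} (h : n < j) : stirFir (1/2) n j = 0 := by
  induction n generalizing j with
  | zero => obtain ⟨m, rfl⟩ := Nat.exists_eq_add_of_lt h; simp [stirFir]
  | succ n ih =>
    obtain ⟨m, rfl⟩ : ∃ m, j = m + 1 := ⟨j - 1, by omega⟩
    rw [stirFir, ih (by omega), ih (by omega)]; ring

lemma sS_eq_zero {j k : ℕ} (h : j < k) : stirSec (1/2) j k = 0 := by
  induction j generalizing k with
  | zero => obtain ⟨m, rfl⟩ := Nat.exists_eq_add_of_lt h; simp [stirSec]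
  | succ j ih =>
    obtain ⟨m, rfl⟩ : ∃ m, k = m + 1 := ⟨k - 1, by omega⟩
    rw [stirSec, ih (by omega), ih (by omega)]; ring

lemma sS_diag (k : ℕ) : stirSec (1/2) k k = 1 := by
  induction k with
  | zero => simp [stirSec]
  | succ k ih => rw [stirSec, ih, sS_eq_zero (by omega)]; ring

lemma sS_zero_eq (j : ℕ) : stirSec (1/2) j 0 = (1/2)^j := by
  induction j with
  | zero => simp [stirSec]
  | succ j ih => rw [stirSec, ih]; ring

lemma sS_ge {j k : ℕ} (h : k ≤ j) : ((k:ℝ) + 1/2)^(j-k) ≤ stirSec (1/2) j k := by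
  induction j generalizing k with
  | zero => interval_cases k; simp [stirSec]
  | succ j ih =>
    rcases Nat.eq_or_lt_of_le h with rfl | h'
    · rw [Nat.sub_self, pow_zero, sS_diag]
    · have hk : k ≤ j := by omega
      have hrec : ((k:ℝ)+1/2)^(j-k) ≤ stirSec (1/2) j k := ih hk
      have he : j + 1 - k = (j - k) + 1 := by omega
      rw [he, pow_succ]
      cases k with
      | zero =>
        rw [stirSec]
        have := sS_nonneg j 0
        push_cast
        nlinarith [hrec]
      | succ k =>
        rw [stirSec]
        have h2 := sS_nonneg j k
        have h3 : (0:ℝ) ≤ ((k:ℝ)+1+1/2) := by positivity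
        have hrec' : ((k:ℝ)+1+1/2)^(j-(k+1)) ≤ stirSec (1/2) j (k+1) := by
          have := ih (k := k+1) hk
          push_cast at this ⊢
          convert this using 2 <;> ring
        push_cast
        nlinarith [pow_nonneg (by positivity : (0:ℝ) ≤ (k:ℝ)+1+1/2) (j-(k+1))]

/-- constant ∏_{i<k} (i+3/2) -/
noncomputable def Ck (k : ℕ) : ℝ := ∏ i ∈ Finset.range k, ((i:ℝ) + 3/2)

lemma Ck_pos (k : ℕ) : 0 < Ck k := Finset.prod_pos (fun i _ => by positivity)

lemma Ck_succ (k : ℕ) : Ck (k+1) = Ck k * ((k:ℝ) + 3/2) := Finset.prod_range_succ _ _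

lemma Ck_ge_one (k : ℕ) : 1 ≤ Ck k := by
  induction k with
  | zero => simp [Ck]
  | succ k ih => rw [Ck_succ]; nlinarith [Nat.cast_nonneg (α:=ℝ) k]

/-- strengthened upper bound, for k+1 ≤ j -/
lemma sS_le_aux : ∀ j k : ℕ, k + 1 ≤ j →
    stirSec (1/2) j (k+1) + Ck k * ((k:ℝ) + 1/2)^(j-(k+1)+1) ≤ Ck (k+1) * ((k:ℝ) + 1 + 1/2)^(j-(k+1)) := by
  intro j
  induction j with
  | zero => intro k h; omega
  | succ j ih =>
    intro k h
    rcases Nat.eq_or_lt_of_le h with he | h'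
    · -- k + 1 = j + 1, i.e. j = k
      have hjk : j = k := by omega
      subst hjk
      rw [Nat.sub_self, pow_zero, sS_diag, Ck_succ]
      simp only [zero_add, pow_one, mul_one]
      nlinarith [Ck_pos j, Ck_ge_one j, Nat.cast_nonneg (α:=ℝ) j]
    · -- k + 1 ≤ j
      have hk1j : k + 1 ≤ j := by omega
      -- bound for stirSec j k
      have hweak : stirSec (1/2) j k ≤ Ck k * ((k:ℝ) + 1/2)^(j-k) := by
        cases k with
        | zero => rw [sS_zero_eq]; simp [Ck]
        | succ m =>
          have h2 := ih m (by omega)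
          have hnn : 0 ≤ Ck m * ((m:ℝ) + 1/2)^(j-(m+1)+1) := by
            have := Ck_pos m; positivity
          have : stirSec (1/2) j (m+1) ≤ Ck (m+1) * ((m:ℝ) + 1 + 1/2)^(j-(m+1)) := by linarith
          calc stirSec (1/2) j (m+1) ≤ Ck (m+1) * ((m:ℝ) + 1 + 1/2)^(j-(m+1)) := this
            _ = Ck (m+1) * (((m+1:ℕ):ℝ) + 1/2)^(j-(m+1)) := by push_cast; ring_nf
      have hrec := ih k hk1j
      rw [stirSec]
      have e1 : j + 1 - (k+1) = (j - (k+1)) + 1 := by omega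
      have e2 : j - (k+1) + 1 = j - k := by omega
      rw [e1]
      rw [e2] at hrec ⊢
      have hb : (0:ℝ) < (k:ℝ) + 1/2 := by positivity
      have hpo : (0:ℝ) ≤ ((k:ℝ)+1/2)^(j-(k+1)) := by positivity
      have hsn := sS_nonneg j (k+1)
      rw [pow_succ]
      have e3 : ((k:ℝ)+1+1/2)^(j-k) = ((k:ℝ)+1+1/2)^(j-(k+1)) * ((k:ℝ)+1+1/2) := by
        rw [← pow_succ, e2]
      have key := mul_le_mul_of_nonneg_left hrec
        (show (0:ℝ) ≤ (k:ℝ)+1+1/2 by positivity)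
      rw [e3]
      nlinarith [key, hweak, pow_nonneg (le_of_lt hb) (j-k), Ck_pos k]

lemma sS_le {j k : ℕ} (h : k ≤ j) : stirSec (1/2) j k ≤ Ck k * ((k:ℝ) + 1/2)^(j-k) := by
  cases k with
  | zero => rw [sS_zero_eq]; simp [Ck]
  | succ m =>
    have h2 := sS_le_aux j m h
    have hnn : 0 ≤ Ck m * ((m:ℝ) + 1/2)^(j-(m+1)+1) := by
      have := Ck_pos m; positivity
    calc stirSec (1/2) j (m+1) ≤ Ck (m+1) * ((m:ℝ) + 1 + 1/2)^(j-(m+1)) := by linarith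
      _ = Ck (m+1) * (((m+1:ℕ):ℝ) + 1/2)^(j-(m+1)) := by push_cast; ring_nf

/-- generating function of r-Stirling numbers of the first kind -/
lemma genFun (x : ℝ) (n : ℕ) :
    ∑ j ∈ Finset.range (n+1), stirFir (1/2) n j * x^j = ∏ i ∈ Finset.range n, (x + i + 1/2) := by
  induction n with
  | zero => simp [stirFir]
  | succ n ih =>
    rw [Finset.prod_range_succ, ← ih]
    rw [Finset.sum_range_succ' (fun j => stirFir (1/2) (n+1) j * x^j)]
    have e1 : ∀ j, stirFir (1/2) (n+1) (j+1) * x^(j+1)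
        = ((n:ℝ)+1/2) * (stirFir (1/2) n (j+1) * x^(j+1)) + x * (stirFir (1/2) n j * x^j) := by
      intro j; rw [stirFir]; push_cast; ring
    rw [Finset.sum_congr rfl (fun j _ => e1 j), Finset.sum_add_distrib, ← Finset.mul_sum,
      ← Finset.mul_sum]
    have e2 : stirFir (1/2) (n+1) 0 * x^0 = ((n:ℝ)+1/2) * (stirFir (1/2) n 0 * x^0) := by
      rw [stirFir]; push_cast; ring
    rw [e2]
    have e3 : ∑ j ∈ Finset.range (n+1), stirFir (1/2) n (j+1) * x^(j+1)
        = ∑ j ∈ Finset.range (n+1), stirFir (1/2) n j * x^j - stirFir (1/2) n 0 * x^0 := by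
      rw [Finset.sum_range_succ (fun j => stirFir (1/2) n (j+1) * x^(j+1)),
        sF_eq_zero (by omega : n < n+1),
        Finset.sum_range_succ' (fun j => stirFir (1/2) n j * x^j)]
      ring
    rw [e3]
    ring

noncomputable def Afun (k n : ℕ) : ℝ :=
  ∑ j ∈ Finset.range (n+1), (-1:ℝ)^j * stirFir (1/2) n j * stirSec (1/2) j k

lemma Afun_split (k n : ℕ) :
    Afun k (n+1) = ((n:ℝ)+1/2) * Afun k n
      - ∑ j ∈ Finset.range (n+1), (-1:ℝ)^j * stirFir (1/2) n j * stirSec (1/2) (j+1) k := by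
  unfold Afun
  rw [Finset.sum_range_succ' (fun j => (-1:ℝ)^j * stirFir (1/2) (n+1) j * stirSec (1/2) j k)]
  have e1 : ∀ j, (-1:ℝ)^(j+1) * stirFir (1/2) (n+1) (j+1) * stirSec (1/2) (j+1) k
      = ((n:ℝ)+1/2) * ((-1:ℝ)^(j+1) * stirFir (1/2) n (j+1) * stirSec (1/2) (j+1) k)
        - ((-1:ℝ)^j * stirFir (1/2) n j * stirSec (1/2) (j+1) k) := by
    intro j
    rw [stirFir]; push_cast; ring
  rw [Finset.sum_congr rfl (fun j _ => e1 j), Finset.sum_sub_distrib]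
  have e2 : (-1:ℝ)^0 * stirFir (1/2) (n+1) 0 * stirSec (1/2) 0 k
      = ((n:ℝ)+1/2) * ((-1:ℝ)^0 * stirFir (1/2) n 0 * stirSec (1/2) 0 k) := by
    rw [stirFir]; push_cast; ring
  rw [e2]
  have e3 : ∑ j ∈ Finset.range (n+1),
        ((n:ℝ)+1/2) * ((-1:ℝ)^(j+1) * stirFir (1/2) n (j+1) * stirSec (1/2) (j+1) k)
      = ((n:ℝ)+1/2) * ∑ j ∈ Finset.range (n+1),
          (-1:ℝ)^(j+1) * stirFir (1/2) n (j+1) * stirSec (1/2) (j+1) k := by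
    rw [Finset.mul_sum]
  have e4 : ∑ j ∈ Finset.range (n+1),
        (-1:ℝ)^(j+1) * stirFir (1/2) n (j+1) * stirSec (1/2) (j+1) k
      = Afun k n - (-1:ℝ)^0 * stirFir (1/2) n 0 * stirSec (1/2) 0 k := by
    unfold Afun
    rw [Finset.sum_range_succ (fun j => (-1:ℝ)^(j+1) * stirFir (1/2) n (j+1) * stirSec (1/2) (j+1) k),
      sF_eq_zero (by omega : n < n+1),
      Finset.sum_range_succ' (fun j => (-1:ℝ)^j * stirFir (1/2) n j * stirSec (1/2) j k)]
    ring
  rw [e3, e4]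
  unfold Afun
  ring

lemma Afun_rec0 (n : ℕ) : Afun 0 (n+1) = (n:ℝ) * Afun 0 n := by
  rw [Afun_split]
  have e : ∀ j, stirSec (1/2) (j+1) 0 = (1/2) * stirSec (1/2) j 0 := fun j => by rw [stirSec]
  have e2 : ∑ j ∈ Finset.range (n+1), (-1:ℝ)^j * stirFir (1/2) n j * stirSec (1/2) (j+1) 0
      = (1/2) * Afun 0 n := by
    unfold Afun
    rw [Finset.mul_sum]
    exact Finset.sum_congr rfl (fun j _ => by rw [e j]; ring)
  rw [e2]; ring

lemma Afun_recS (k n : ℕ) :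
    Afun (k+1) (n+1) = ((n:ℝ) - (k+1)) * Afun (k+1) n - Afun k n := by
  rw [Afun_split]
  have e : ∀ j, stirSec (1/2) (j+1) (k+1)
      = ((k:ℝ)+1+1/2) * stirSec (1/2) j (k+1) + stirSec (1/2) j k := fun j => by rw [stirSec]
  have e2 : ∑ j ∈ Finset.range (n+1), (-1:ℝ)^j * stirFir (1/2) n j * stirSec (1/2) (j+1) (k+1)
      = ((k:ℝ)+1+1/2) * Afun (k+1) n + Afun k n := by
    unfold Afun
    rw [Finset.mul_sum, ← Finset.sum_add_distrib]
    exact Finset.sum_congr rfl (fun j _ => by rw [e j]; ring)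
  rw [e2]; ring

lemma Afun_eq_zero : ∀ k n : ℕ, k < n → Afun k n = 0 := by
  intro k
  induction k with
  | zero =>
    intro n hn
    induction n with
    | zero => omega
    | succ m ih =>
      rw [Afun_rec0]
      rcases Nat.eq_zero_or_pos m with rfl | hm
      · norm_num
      · rw [ih (by omega)]; ring
  | succ k ihk =>
    intro n hn
    induction n with
    | zero => omega
    | succ m ih =>
      rw [Afun_recS]
      rcases Nat.eq_or_lt_of_le (Nat.succ_le_of_lt hn) with he | hlt
      · -- m + 1 = k + 2, i.e. m = k + 1
        have : m = k + 1 := by omega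
        subst this
        rw [ihk (k+1) (by omega)]
        push_cast; ring
      · rw [ih (by omega), ihk m (by omega)]; ring

lemma log_gap_le {y : ℝ} (hy : 0 < y) : Real.log (y+1) - Real.log y ≤ 1/y := by
  rw [← Real.log_div (by positivity) (by positivity)]
  have h := Real.log_le_sub_one_of_pos (show (0:ℝ) < (y+1)/y by positivity)
  have : (y+1)/y - 1 = 1/y := by field_simp; ring
  linarith [h.trans_eq this]

lemma le_log_gap {y : ℝ} (hy : 0 < y) : 1/(y+1) ≤ Real.log (y+1) - Real.log y := by
  have h := Real.log_le_sub_one_of_pos (show (0:ℝ) < y/(y+1) by positivity)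
  rw [Real.log_div (by positivity) (by positivity)] at h
  have : y/(y+1) - 1 = -(1/(y+1)) := by field_simp; ring
  linarith [h.trans_eq this]

lemma harm_ub (n : ℕ) : ∑ i ∈ Finset.range n, 1/((i:ℝ)+1) ≤ 1 + Real.log n := by
  induction n with
  | zero => simp
  | succ n ih =>
    rw [Finset.sum_range_succ]
    rcases Nat.eq_zero_or_pos n with rfl | hn
    · norm_num [Real.log_nonneg]
    · have h1 : 1/((n:ℝ)+1) ≤ Real.log ((n:ℝ)+1) - Real.log n := le_log_gap (by positivity)
      have : ((n:ℕ):ℝ)+1 = ((n+1:ℕ):ℝ) := by push_cast; ring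
      rw [← this]
      linarith

lemma harm_lb (n : ℕ) {c : ℝ} (hc : 0 < c) :
    Real.log ((n:ℝ)+c) - Real.log c ≤ ∑ i ∈ Finset.range n, 1/((i:ℝ)+c) := by
  induction n with
  | zero => simp
  | succ n ih =>
    rw [Finset.sum_range_succ]
    have h1 : Real.log ((n:ℝ)+c+1) - Real.log ((n:ℝ)+c) ≤ 1/((n:ℝ)+c) :=
      log_gap_le (by positivity)
    have : ((n+1:ℕ):ℝ)+c = ((n:ℝ)+c)+1 := by push_cast; ring
    rw [this]
    linarith

noncomputable def Zf (n : ℕ) (x : ℝ) : ℝ := ∏ i ∈ Finset.range n, (x + i + 1/2)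

lemma Zf_pos (n : ℕ) {x : ℝ} (hx : 0 ≤ x) : 0 < Zf n x :=
  Finset.prod_pos (fun i _ => by have : (0:ℝ) ≤ (i:ℝ) := Nat.cast_nonneg i; positivity)

lemma Zf_eq_sum (n : ℕ) (x : ℝ) :
    Zf n x = ∑ j ∈ Finset.range (n+1), stirFir (1/2) n j * x^j := (genFun x n).symm

lemma Zf_le_exp (n : ℕ) (a : ℝ) (y : ℝ) (f : ℕ → ℝ)
    (h0 : ∀ i ∈ Finset.range n, 0 ≤ y + i + 1/2)
    (hf : ∀ i ∈ Finset.range n, y + i + 1/2 ≤ (a + i + 1/2) * Real.exp (f i)) :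
    Zf n y ≤ Zf n a * Real.exp (∑ i ∈ Finset.range n, f i) := by
  have := Finset.prod_le_prod h0 hf
  rw [Finset.prod_mul_distrib] at this
  rw [Real.exp_sum]
  exact this

lemma P1 {a x : ℝ} (ha : 1/2 ≤ a) (hx : 1 ≤ x) (n : ℕ) :
    Zf n (a*x) ≤ Zf n a * Real.exp (a*(x-1)*(1 + Real.log n)) := by
  have hZa : 0 < Zf n a := Zf_pos n (by linarith)
  have step : Zf n (a*x) ≤ Zf n a * Real.exp (∑ i ∈ Finset.range n, a*(x-1)/((i:ℝ)+1)) := by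
    apply Zf_le_exp
    · intro i _
      have : (0:ℝ) ≤ (i:ℝ) := Nat.cast_nonneg i
      nlinarith
    · intro i _
      have hi : (0:ℝ) < (i:ℝ)+1 := by positivity
      have ht : a*(x-1) ≤ (a+i+1/2) * (a*(x-1)/((i:ℝ)+1)) := by
        rw [mul_comm (a+(i:ℝ)+1/2), div_mul_eq_mul_div, le_div_iff₀ hi]
        have h2 : 0 ≤ a*(x-1) := by nlinarith
        nlinarith [mul_le_mul_of_nonneg_left
          (show (i:ℝ)+1 ≤ a+(i:ℝ)+1/2 by linarith) h2]
      have he := Real.add_one_le_exp (a*(x-1)/((i:ℝ)+1))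
      have hp : (0:ℝ) < a+i+1/2 := by
        have : (0:ℝ) ≤ (i:ℝ) := Nat.cast_nonneg i; linarith
      nlinarith [mul_le_mul_of_nonneg_left he (le_of_lt hp)]
  refine step.trans (mul_le_mul_of_nonneg_left (Real.exp_le_exp.mpr ?_) (le_of_lt hZa)) 
  have h1 := harm_ub n
  have h2 : 0 ≤ a*(x-1) := by nlinarith
  have e : ∑ i ∈ Finset.range n, a*(x-1)/((i:ℝ)+1)
      = a*(x-1) * ∑ i ∈ Finset.range n, 1/((i:ℝ)+1) := by
    rw [Finset.mul_sum]; exact Finset.sum_congr rfl (fun i _ => by ring)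
  rw [e]
  nlinarith

lemma P2 {a x : ℝ} (ha : 1/2 ≤ a) (hx0 : 0 ≤ x) (hx : x ≤ 1) (n : ℕ) :
    Zf n (a*x) ≤ Zf n a * Real.exp (-(a*(1-x)) * (Real.log ((n:ℝ)+(a+1)) - Real.log (a+1))) := by
  have hZa : 0 < Zf n a := Zf_pos n (by linarith)
  have step : Zf n (a*x) ≤ Zf n a * Real.exp (∑ i ∈ Finset.range n, -(a*(1-x))/((i:ℝ)+(a+1))) := by
    apply Zf_le_exp
    · intro i _
      have : (0:ℝ) ≤ (i:ℝ) := Nat.cast_nonneg i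
      nlinarith
    · intro i _
      have hi : (0:ℝ) < (i:ℝ)+(a+1) := by
        have : (0:ℝ) ≤ (i:ℝ) := Nat.cast_nonneg i; linarith
      have ht : (a+i+1/2) * (a*(1-x)/((i:ℝ)+(a+1))) ≤ a*(1-x) := by
        rw [mul_comm (a+(i:ℝ)+1/2), div_mul_eq_mul_div, div_le_iff₀ hi]
        have h2 : 0 ≤ a*(1-x) := by nlinarith
        nlinarith [mul_le_mul_of_nonneg_left
          (show a+(i:ℝ)+1/2 ≤ (i:ℝ)+(a+1) by linarith) h2]
      have he := Real.add_one_le_exp (-(a*(1-x))/((i:ℝ)+(a+1)))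
      have hp : (0:ℝ) < a+i+1/2 := by
        have : (0:ℝ) ≤ (i:ℝ) := Nat.cast_nonneg i; linarith
      have := mul_le_mul_of_nonneg_left he (le_of_lt hp)
      have hneg : -(a*(1-x))/((i:ℝ)+(a+1)) = -(a*(1-x)/((i:ℝ)+(a+1))) := by ring
      nlinarith [this]
  refine step.trans (mul_le_mul_of_nonneg_left (Real.exp_le_exp.mpr ?_) (le_of_lt hZa)) 
  have h1 := harm_lb n (show (0:ℝ) < a+1 by linarith)
  have h2 : 0 ≤ a*(1-x) := by nlinarith
  have : ∑ i ∈ Finset.range n, -(a*(1-x))/((i:ℝ)+(a+1))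
      = -(a*(1-x)) * ∑ i ∈ Finset.range n, 1/((i:ℝ)+(a+1)) := by
    rw [Finset.mul_sum]; exact Finset.sum_congr rfl (fun i _ => by ring)
  rw [this]
  nlinarith

lemma P3 {a : ℝ} (ha : 3/2 ≤ a) (n : ℕ) :
    Zf n 1 ≤ Zf n a * Real.exp (-(1/2) * (Real.log ((n:ℝ)+2) - Real.log 2)) := by
  have hZa : 0 < Zf n a := Zf_pos n (by linarith)
  have step : Zf n 1 ≤ Zf n a * Real.exp (∑ i ∈ Finset.range n, -(1/2)/((i:ℝ)+2)) := by
    apply Zf_le_exp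
    · intro i _
      have : (0:ℝ) ≤ (i:ℝ) := Nat.cast_nonneg i
      nlinarith
    · intro i _
      have hi : (0:ℝ) < (i:ℝ)+2 := by positivity
      have ht : (a+i+1/2) * ((1/2)/((i:ℝ)+2)) ≤ a - 1 := by
        rw [mul_comm (a+(i:ℝ)+1/2), div_mul_eq_mul_div, div_le_iff₀ hi]
        nlinarith [mul_nonneg (show (0:ℝ) ≤ a - 3/2 by linarith) (Nat.cast_nonneg (α:=ℝ) i)]
      have he := Real.add_one_le_exp (-(1/2)/((i:ℝ)+2))
      have hp : (0:ℝ) < a+i+1/2 := by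
        have : (0:ℝ) ≤ (i:ℝ) := Nat.cast_nonneg i; linarith
      have hneg : -(1/2)/((i:ℝ)+2) = -((1/2)/((i:ℝ)+2)) := by ring
      nlinarith [mul_le_mul_of_nonneg_left he (le_of_lt hp)]
  refine step.trans (mul_le_mul_of_nonneg_left (Real.exp_le_exp.mpr ?_) (le_of_lt hZa)) 
  have h1 := harm_lb n (show (0:ℝ) < 2 by norm_num)
  have : ∑ i ∈ Finset.range n, -(1/2)/((i:ℝ)+2)
      = -(1/2) * ∑ i ∈ Finset.range n, 1/((i:ℝ)+2) := by
    rw [Finset.mul_sum]; exact Finset.sum_congr rfl (fun i _ => by ring)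
  rw [this]
  nlinarith

lemma lahNum_eq_range {k n : ℕ} (hkn : k ≤ n) :
    lahNum (1/2) n k = ∑ j ∈ Finset.range (n+1), stirFir (1/2) n j * stirSec (1/2) j k := by
  unfold lahNum
  rw [Finset.range_eq_Ico, ← Finset.sum_Ico_consecutive _ (Nat.zero_le k) (by omega : k ≤ n+1),
    ← Finset.Ico_add_one_right_eq_Icc]
  have : ∑ j ∈ Finset.Ico 0 k, stirFir (1/2) n j * stirSec (1/2) j k = 0 := by
    apply Finset.sum_eq_zero
    intro j hj
    rw [sS_eq_zero (Finset.mem_Ico.mp hj).2, mul_zero]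
  rw [this]; ring

lemma lahNum_nonneg (k n : ℕ) : 0 ≤ lahNum (1/2) n k :=
  Finset.sum_nonneg (fun j _ => mul_nonneg (sF_nonneg n j) (sS_nonneg j k))

lemma L_lb (k : ℕ) : ∃ N : ℕ, ∀ n, N ≤ n → k ≤ n →
    Zf n ((k:ℝ)+1/2) ≤ 2*((k:ℝ)+1/2)^k * lahNum (1/2) n k := by
  rcases Nat.eq_zero_or_pos k with rfl | hk
  · refine ⟨0, fun n _ _ => ?_⟩
    have : Zf n ((0:ℕ)+1/2) = lahNum (1/2) n 0 := by
      rw [Zf_eq_sum, lahNum_eq_range (Nat.zero_le n)]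
      refine Finset.sum_congr rfl (fun j _ => ?_)
      rw [sS_zero_eq]; push_cast; ring_nf
    rw [this]
    have := lahNum_nonneg 0 n
    push_cast
    nlinarith
  · -- k ≥ 1
    obtain ⟨a, ha_def⟩ : ∃ a:ℝ, a = (k:ℝ)+1/2 := ⟨_, rfl⟩
    rw [← ha_def]
    have ha : (3:ℝ)/2 ≤ a := by
      have : (1:ℝ) ≤ (k:ℝ) := by exact_mod_cast hk
      rw [ha_def]; linarith
    have ha0 : (0:ℝ) < a := by linarith
    -- eventually a^k * exp(-(1/2)(log(n+2)-log 2)) ≤ 1/2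
    have htend : Tendsto (fun n : ℕ =>
        a^k * Real.exp (-(1/2) * (Real.log ((n:ℝ)+2) - Real.log 2))) atTop (nhds 0) := by
      have h1 : Tendsto (fun n : ℕ => Real.log ((n:ℝ)+2)) atTop atTop :=
        Real.tendsto_log_atTop.comp
          (tendsto_atTop_add_const_right _ 2 tendsto_natCast_atTop_atTop)
      have h2 : Tendsto (fun n : ℕ => -(1/2) * (Real.log ((n:ℝ)+2) - Real.log 2)) atTop atBot := by
        have h3 : Tendsto (fun n : ℕ => Real.log ((n:ℝ)+2) - Real.log 2) atTop atTop :=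
          tendsto_atTop_add_const_right _ (-Real.log 2) h1 |>.congr (fun n => by ring)
        have := h3.const_mul_atTop (show (0:ℝ) < 1/2 by norm_num)
        have h4 : Tendsto (fun n : ℕ => -((1/2) * (Real.log ((n:ℝ)+2) - Real.log 2))) atTop atBot :=
          tendsto_neg_atBot_iff.mpr this
        exact h4.congr (fun n => by ring)
      have := Real.tendsto_exp_atBot.comp h2
      have h5 := this.const_mul (a^k)
      simpa using h5
    have hev : ∀ᶠ n : ℕ in atTop,
        a^k * Real.exp (-(1/2) * (Real.log ((n:ℝ)+2) - Real.log 2)) ≤ 1/2 := by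
      have := htend.eventually (eventually_le_nhds (show (0:ℝ) < 1/2 by norm_num))
      exact this
    obtain ⟨N, hN⟩ := eventually_atTop.mp hev
    refine ⟨N, fun n hNn hkn => ?_⟩
    -- main chain
    have split : Zf n a = (∑ j ∈ Finset.Ico 0 k, stirFir (1/2) n j * a^j)
        + ∑ j ∈ Finset.Icc k n, stirFir (1/2) n j * a^j := by
      rw [Zf_eq_sum, Finset.range_eq_Ico,
        ← Finset.sum_Ico_consecutive _ (Nat.zero_le k) (by omega : k ≤ n+1),
        ← Finset.Ico_add_one_right_eq_Icc]
    have part1 : ∑ j ∈ Finset.Icc k n, stirFir (1/2) n j * a^j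
        ≤ a^k * lahNum (1/2) n k := by
      unfold lahNum
      rw [Finset.mul_sum]
      apply Finset.sum_le_sum
      intro j hj
      have hkj : k ≤ j := (Finset.mem_Icc.mp hj).1
      have e : a^j = a^k * a^(j-k) := by rw [← pow_add]; congr 1; omega
      rw [e]
      have h1 := sS_ge hkj
      rw [← ha_def] at h1
      have h2 := sF_nonneg n j
      have h3 : (0:ℝ) ≤ a^k := by positivity
      have h4 : (0:ℝ) ≤ a^(j-k) := by positivity
      nlinarith [mul_le_mul_of_nonneg_left h1 (mul_nonneg h3 h2)]
    have part2 : ∑ j ∈ Finset.Ico 0 k, stirFir (1/2) n j * a^j ≤ a^k * Zf n 1 := by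
      have s1 : ∑ j ∈ Finset.Ico 0 k, stirFir (1/2) n j * a^j
          ≤ ∑ j ∈ Finset.Ico 0 k, a^k * (stirFir (1/2) n j * 1^j) := by
        apply Finset.sum_le_sum
        intro j hj
        have hjk : j < k := (Finset.mem_Ico.mp hj).2
        have h1 : a^j ≤ a^k := pow_le_pow_right₀ (by linarith) (le_of_lt hjk)
        have h2 := sF_nonneg n j
        rw [one_pow, mul_one]
        nlinarith
      refine s1.trans ?_
      rw [← Finset.mul_sum]
      apply mul_le_mul_of_nonneg_left _ (by positivity)
      rw [Zf_eq_sum]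
      apply Finset.sum_le_sum_of_subset_of_nonneg
      · intro j hj
        rw [Finset.mem_range]
        have := (Finset.mem_Ico.mp hj).2; omega
      · intro j _ _
        exact mul_nonneg (sF_nonneg n j) (by positivity)
    have p3 := P3 ha n
    have hEn := hN n hNn
    have hZa : 0 < Zf n a := Zf_pos n (le_of_lt ha0)
    -- Zf n a ≤ a^k L + a^k * Zf n 1 ≤ a^k L + a^k * Zf n a * E ≤ a^k L + (1/2) Zf n a
    have hZ1 : a^k * Zf n 1 ≤ (1/2) * Zf n a := by
      have h6 : a^k * Zf n 1 ≤ a^k * (Zf n a * Real.exp (-(1/2) * (Real.log ((n:ℝ)+2) - Real.log 2))) :=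
        mul_le_mul_of_nonneg_left p3 (by positivity)
      calc a^k * Zf n 1 ≤ a^k * (Zf n a * Real.exp (-(1/2) * (Real.log ((n:ℝ)+2) - Real.log 2))) := h6
        _ = (a^k * Real.exp (-(1/2) * (Real.log ((n:ℝ)+2) - Real.log 2))) * Zf n a := by ring
        _ ≤ (1/2) * Zf n a := mul_le_mul_of_nonneg_right hEn (le_of_lt hZa)
    nlinarith [split, part1, part2, hZ1]

lemma tail_core (k n M : ℕ) (s : Finset ℕ) (hs : s ⊆ Finset.range (n+1))
    (hks : ∀ j ∈ s, k ≤ j) {x : ℝ} (hx : 0 < x) (hM : ∀ j ∈ s, x^M ≤ x^j) :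
    ∑ j ∈ s, stirFir (1/2) n j * stirSec (1/2) j k
      ≤ Ck k / ((k:ℝ)+1/2)^k / x^M * Zf n (((k:ℝ)+1/2)*x) := by
  obtain ⟨a, ha_def⟩ : ∃ a:ℝ, a = (k:ℝ)+1/2 := ⟨_, rfl⟩
  rw [← ha_def]
  have ha0 : (0:ℝ) < a := by rw [ha_def]; positivity
  have hxM : (0:ℝ) < x^M := pow_pos hx M
  have hCk := Ck_pos k
  have term : ∀ j ∈ s, stirFir (1/2) n j * stirSec (1/2) j k
      ≤ Ck k / a^k / x^M * (stirFir (1/2) n j * (a*x)^j) := by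
    intro j hj
    have hkj := hks j hj
    have h1 : stirSec (1/2) j k ≤ Ck k * a^(j-k) := by
      have := sS_le hkj; rw [← ha_def] at this; exact this
    have key : Ck k * a^(j-k) ≤ Ck k / a^k / x^M * (a*x)^j := by
      rw [mul_pow, div_div, div_mul_eq_mul_div, le_div_iff₀ (by positivity)]
      have e : a^j = a^k * a^(j-k) := by rw [← pow_add]; congr 1; omega
      rw [e]
      have := mul_le_mul_of_nonneg_left (hM j hj)
        (show (0:ℝ) ≤ Ck k * a^(j-k) * a^k by positivity)
      nlinarith [this]
    have hF := sF_nonneg n j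
    calc stirFir (1/2) n j * stirSec (1/2) j k
        ≤ stirFir (1/2) n j * (Ck k / a^k / x^M * (a*x)^j) :=
          mul_le_mul_of_nonneg_left (h1.trans key) hF
      _ = Ck k / a^k / x^M * (stirFir (1/2) n j * (a*x)^j) := by ring
  calc ∑ j ∈ s, stirFir (1/2) n j * stirSec (1/2) j k
      ≤ ∑ j ∈ s, Ck k / a^k / x^M * (stirFir (1/2) n j * (a*x)^j) := Finset.sum_le_sum term
    _ = Ck k / a^k / x^M * ∑ j ∈ s, stirFir (1/2) n j * (a*x)^j := by rw [Finset.mul_sum]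
    _ ≤ Ck k / a^k / x^M * Zf n (a*x) := by
        apply mul_le_mul_of_nonneg_left _ (by positivity)
        rw [Zf_eq_sum]
        apply Finset.sum_le_sum_of_subset_of_nonneg hs
        intro j _ _
        exact mul_nonneg (sF_nonneg n j) (by positivity)

lemma parity_half {k n : ℕ} (hkn : k < n) (p : ℕ) :
    ∑ j ∈ (Finset.range (n+1)).filter (fun j => j % 2 = p),
        stirFir (1/2) n j * stirSec (1/2) j k = lahNum (1/2) n k / 2 ∨ 1 < p := by
  rcases Nat.lt_or_ge p 2 with hp | hp
  swap
  · right; omega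
  left
  have hA : Afun k n = 0 := Afun_eq_zero k n hkn
  set t : ℕ → ℝ := fun j => stirFir (1/2) n j * stirSec (1/2) j k with ht
  have h1 : ∑ j ∈ (Finset.range (n+1)).filter (fun j => j % 2 = 0), t j
      + ∑ j ∈ (Finset.range (n+1)).filter (fun j => ¬ (j % 2 = 0)), t j
      = ∑ j ∈ Finset.range (n+1), t j :=
    Finset.sum_filter_add_sum_filter_not _ _ _
  have h2 : ∑ j ∈ (Finset.range (n+1)).filter (fun j => j % 2 = 0), t j
      - ∑ j ∈ (Finset.range (n+1)).filter (fun j => ¬ (j % 2 = 0)), t j = Afun k n := by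
    unfold Afun
    rw [← Finset.sum_filter_add_sum_filter_not (Finset.range (n+1)) (fun j => j % 2 = 0)
      (fun j => (-1:ℝ)^j * stirFir (1/2) n j * stirSec (1/2) j k)]
    have e1 : ∑ j ∈ (Finset.range (n+1)).filter (fun j => j % 2 = 0),
        (-1:ℝ)^j * stirFir (1/2) n j * stirSec (1/2) j k
        = ∑ j ∈ (Finset.range (n+1)).filter (fun j => j % 2 = 0), t j := by
      apply Finset.sum_congr rfl
      intro j hj
      have := (Finset.mem_filter.mp hj).2
      have he : Even j := Nat.even_iff.mpr this
      rw [he.neg_one_pow, ht]; ring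
    have e2 : ∑ j ∈ (Finset.range (n+1)).filter (fun j => ¬ (j % 2 = 0)),
        (-1:ℝ)^j * stirFir (1/2) n j * stirSec (1/2) j k
        = - ∑ j ∈ (Finset.range (n+1)).filter (fun j => ¬ (j % 2 = 0)), t j := by
      rw [← Finset.sum_neg_distrib]
      apply Finset.sum_congr rfl
      intro j hj
      have := (Finset.mem_filter.mp hj).2
      have ho : Odd j := Nat.odd_iff.mpr (by omega)
      rw [ho.neg_one_pow, ht]; ring
    rw [e1, e2]; ring
  rw [hA] at h2
  have hLr : ∑ j ∈ Finset.range (n+1), t j = lahNum (1/2) n k :=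
    (lahNum_eq_range (le_of_lt hkn)).symm
  rw [hLr] at h1
  interval_cases p
  · linarith
  · have e3 : (Finset.range (n+1)).filter (fun j => j % 2 = 1)
        = (Finset.range (n+1)).filter (fun j => ¬ (j % 2 = 0)) := by
      apply Finset.filter_congr
      intro j _
      constructor <;> omega
    rw [e3]
    linarith

lemma range_filter_split {n d k : ℕ} (hkd : k < d) (hdn : d ≤ n) (p : ℕ → Prop) [DecidablePred p]
    (t : ℕ → ℝ) (h0 : ∀ j, j < k → t j = 0) :
    ∑ j ∈ (Finset.range (n+1)).filter p, t j
      = ∑ j ∈ (Finset.Icc k (d-1)).filter p, t j + ∑ j ∈ (Finset.Icc d n).filter p, t j := by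
  have e1 : Finset.Ico k d = Finset.Icc k (d-1) := by
    rw [← Finset.Ico_add_one_right_eq_Icc]; congr 1; omega
  have e2 : Finset.Ico d (n+1) = Finset.Icc d n := Finset.Ico_add_one_right_eq_Icc d n
  rw [Finset.sum_filter, Finset.sum_filter, Finset.sum_filter, Finset.range_eq_Ico,
    ← Finset.sum_Ico_consecutive _ (Nat.zero_le d) (by omega : d ≤ n+1),
    ← Finset.sum_Ico_consecutive _ (Nat.zero_le k) (le_of_lt hkd), e1, e2]
  have hz : ∑ j ∈ Finset.Ico 0 k, (if p j then t j else 0) = 0 := by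
    apply Finset.sum_eq_zero
    intro j hj
    rw [h0 j (Finset.mem_Ico.mp hj).2]; simp
  rw [hz]; ring

lemma exp_decay_tendsto (K ε : ℝ) (hε : 0 < ε) :
    Tendsto (fun d : ℕ => K * Real.exp (-(ε * d))) atTop (nhds 0) := by
  have h1 : Tendsto (fun d : ℕ => ε * (d:ℝ)) atTop atTop :=
    tendsto_natCast_atTop_atTop.const_mul_atTop hε
  have h2 : Tendsto (fun d : ℕ => -(ε * (d:ℝ))) atTop atBot := tendsto_neg_atBot_iff.mpr h1
  have h3 := Real.tendsto_exp_atBot.comp h2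
  simpa using h3.const_mul K

lemma neg_log_le {x : ℝ} (hx : 0 < x) : 1 - x⁻¹ ≤ Real.log x := by
  have h := Real.log_le_sub_one_of_pos (show (0:ℝ) < x⁻¹ by positivity)
  rw [Real.log_inv] at h
  linarith


set_option maxHeartbeats 2000000 in
theorem weak_threshold (k : ℕ) (n : ℕ → ℕ) (hn : ∀ d, d ≤ n d) (γ : EReal)
    (hγ : Tendsto (fun d : ℕ => ((Real.log (n d) / (d : ℝ) : ℝ) : EReal)) atTop (nhds γ)) :
    (γ < (((1 / ((k : ℝ) + 1 / 2)) : ℝ) : EReal) →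
      Tendsto (fun d : ℕ =>
          2 * ∑ j ∈ (Finset.Icc k (d - 1)).filter (fun j => j % 2 = (d - 1) % 2),
            lahPMF (1 / 2) (n d) k j)
        atTop (nhds 1)) ∧
    ((((1 / ((k : ℝ) + 1 / 2)) : ℝ) : EReal) < γ →
      Tendsto (fun d : ℕ =>
          2 * ∑ j ∈ (Finset.Icc k (d - 1)).filter (fun j => j % 2 = (d - 1) % 2),
            lahPMF (1 / 2) (n d) k j)
        atTop (nhds 0)) := by
  have ha2 : (0:ℝ) < (k:ℝ) + 1/2 := by positivity
  have ha12 : (1:ℝ)/2 ≤ (k:ℝ) + 1/2 := by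
    have : (0:ℝ) ≤ (k:ℝ) := Nat.cast_nonneg k
    linarith
  obtain ⟨N₀, hN₀⟩ := L_lb k
  set G : ℕ → ℝ := fun d =>
    2 * ∑ j ∈ (Finset.Icc k (d - 1)).filter (fun j => j % 2 = (d - 1) % 2),
      lahPMF (1 / 2) (n d) k j with hG
  have hGnonneg : ∀ d, 0 ≤ G d := by
    intro d
    have : ∀ j ∈ (Finset.Icc k (d - 1)).filter (fun j => j % 2 = (d - 1) % 2),
        0 ≤ lahPMF (1/2) (n d) k j := by
      intro j _
      exact div_nonneg (mul_nonneg (sF_nonneg _ _) (sS_nonneg _ _)) (lahNum_nonneg _ _)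
    have := Finset.sum_nonneg this
    positivity
  constructor
  · -- γ < 1/a : tendsto 1
    intro hlt
    obtain ⟨β₀, hβ1, hβ2⟩ := EReal.exists_between_coe_real hlt
    obtain ⟨β, hβdef⟩ : ∃ β:ℝ, β = max β₀ (1/(2*((k:ℝ)+1/2))) := ⟨_, rfl⟩
    have hβγ : γ < (β : EReal) := by
      rw [hβdef]
      exact lt_of_lt_of_le hβ1 (EReal.coe_le_coe_iff.mpr (le_max_left _ _))
    have hβτ : β < 1/((k:ℝ)+1/2) := by
      rw [hβdef]
      apply max_lt
      · exact EReal.coe_lt_coe_iff.mp hβ2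
      · rw [div_lt_div_iff₀ (by positivity) ha2]; linarith
    have hβ0 : 0 < β := by
      rw [hβdef]
      exact lt_of_lt_of_le (by positivity) (le_max_right _ _)
    have hs1 : ((k:ℝ)+1/2) * β < 1 := by
      rw [lt_div_iff₀ ha2] at hβτ
      nlinarith
    have hs0 : 0 < ((k:ℝ)+1/2) * β := by positivity
    obtain ⟨x, hx1, hsx1, hε⟩ : ∃ x:ℝ, 1 < x ∧ ((k:ℝ)+1/2)*β*x < 1 ∧
        0 < Real.log x - ((k:ℝ)+1/2)*β*(x-1) := by
      obtain ⟨t, htdef⟩ : ∃ t:ℝ, t = ((k:ℝ)+1/2)*β := ⟨_, rfl⟩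
      rw [← htdef] at hs0 hs1
      obtain ⟨x, hxdef⟩ : ∃ x:ℝ, x = (1+t)/(2*t) := ⟨_, rfl⟩
      have hx1 : 1 < x := by
        rw [hxdef, lt_div_iff₀ (by positivity)]; linarith
      have hx0 : (0:ℝ) < x := by linarith
      have htx : t * x = (1+t)/2 := by rw [hxdef]; field_simp
      have htx1 : t * x < 1 := by rw [htx]; linarith
      refine ⟨x, hx1, by rw [← htdef]; linarith, ?_⟩
      rw [← htdef]
      have hlog := neg_log_le hx0
      have hxx : x * x⁻¹ = 1 := mul_inv_cancel₀ (ne_of_gt hx0)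
      nlinarith [mul_pos (sub_pos.mpr hx1) (sub_pos.mpr htx1),
        mul_le_mul_of_nonneg_left hlog (le_of_lt hx0), hxx, hx0,
        mul_pos hx0 (sub_pos.mpr hx1)]
    have hx0 : (0:ℝ) < x := lt_trans one_pos hx1
    have hevβ : ∀ᶠ d : ℕ in atTop,
        ((Real.log (n d) / (d:ℝ) : ℝ) : EReal) < (β : EReal) :=
      hγ.eventually_lt_const hβγ
    have hRu : ∀ᶠ d : ℕ in atTop,
        1 - G d ≤ (4 * Ck k * Real.exp (((k:ℝ)+1/2)*(x-1)))
          * Real.exp (-((Real.log x - ((k:ℝ)+1/2)*β*(x-1)) * d)) ∧ 0 ≤ 1 - G d := by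
      filter_upwards [hevβ, eventually_ge_atTop (max (k+2) (N₀+1))] with d hβd hd
      have hdk : k + 2 ≤ d := le_trans (le_max_left _ _) hd
      have hd1 : 1 ≤ d := by omega
      have hdN : N₀ ≤ n d := by
        have h1 := hn d
        have h2 : N₀ + 1 ≤ d := le_trans (le_max_right _ _) hd
        omega
      have hkn : k ≤ n d := by have := hn d; omega
      have hkN : k < n d := by have := hn d; omega
      have hL := hN₀ (n d) hdN hkn
      have hZpos : 0 < Zf (n d) ((k:ℝ)+1/2) := Zf_pos _ (le_of_lt ha2)
      have hLpos : 0 < lahNum (1/2) (n d) k := by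
        nlinarith [pow_pos ha2 k]
      have hlogd : Real.log (n d) < β * d := by
        have h1 : Real.log (n d) / (d:ℝ) < β := EReal.coe_lt_coe_iff.mp hβd
        have hd0 : (0:ℝ) < (d:ℝ) := by exact_mod_cast hd1
        rw [div_lt_iff₀ hd0] at h1
        linarith [h1]
      set num : ℕ → ℝ := fun j => stirFir (1/2) (n d) j * stirSec (1/2) j k with hnum
      have hhalf : ∑ j ∈ (Finset.range (n d + 1)).filter (fun j => j % 2 = (d-1) % 2), num j
          = lahNum (1/2) (n d) k / 2 := by
        rcases parity_half hkN ((d-1) % 2) with h | h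
        · exact h
        · omega
      have hsplit := range_filter_split (show k < d by omega) (hn d)
        (fun j => j % 2 = (d-1) % 2) num (fun j hj => by
          rw [hnum]; simp only; rw [sS_eq_zero hj, mul_zero])
      set M : ℝ := ∑ j ∈ (Finset.Icc d (n d)).filter (fun j => j % 2 = (d-1) % 2), num j
        with hM
      have hS : ∑ j ∈ (Finset.Icc k (d-1)).filter (fun j => j % 2 = (d-1) % 2), num j
          = lahNum (1/2) (n d) k / 2 - M := by
        rw [← hhalf, hsplit]; ring
      have hGd : G d = 2 * ((lahNum (1/2) (n d) k / 2 - M) / lahNum (1/2) (n d) k) := by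
        rw [hG]
        simp only
        rw [← hS]
        congr 1
        rw [eq_div_iff (ne_of_gt hLpos), Finset.sum_mul]
        apply Finset.sum_congr rfl
        intro j _
        rw [lahPMF, hnum]
        field_simp
      have hMnonneg : 0 ≤ M := by
        apply Finset.sum_nonneg
        intro j _
        exact mul_nonneg (sF_nonneg _ _) (sS_nonneg _ _)
      have hR : 1 - G d = 2 * M / lahNum (1/2) (n d) k := by
        rw [hGd]; field_simp; ring
      have hMle : M ≤ Ck k / ((k:ℝ)+1/2)^k / x^d * Zf (n d) (((k:ℝ)+1/2)*x) := by
        have hsub : M ≤ ∑ j ∈ Finset.Icc d (n d), num j := by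
          apply Finset.sum_le_sum_of_subset_of_nonneg (Finset.filter_subset _ _)
          intro j _ _
          exact mul_nonneg (sF_nonneg _ _) (sS_nonneg _ _)
        refine hsub.trans ?_
        apply tail_core k (n d) d
        · intro j hj
          rw [Finset.mem_range]
          have := (Finset.mem_Icc.mp hj).2; omega
        · intro j hj
          have := (Finset.mem_Icc.mp hj).1; omega
        · exact hx0
        · intro j hj
          exact pow_le_pow_right₀ (le_of_lt hx1) (Finset.mem_Icc.mp hj).1
      have hP1 := P1 ha12 (le_of_lt hx1) (n d)
      have he2 : ((k:ℝ)+1/2)*(x-1)*(1 + Real.log (n d))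
          ≤ ((k:ℝ)+1/2)*(x-1)*(1 + β*d) := by
        apply mul_le_mul_of_nonneg_left _ (by nlinarith)
        linarith
      have hZax : Zf (n d) (((k:ℝ)+1/2)*x)
          ≤ Zf (n d) ((k:ℝ)+1/2) * Real.exp (((k:ℝ)+1/2)*(x-1)*(1 + β*d)) := by
        refine hP1.trans ?_
        exact mul_le_mul_of_nonneg_left (Real.exp_le_exp.mpr he2) (le_of_lt hZpos)
      constructor
      · rw [hR]
        rw [div_le_iff₀ hLpos]
        have hxd : (0:ℝ) < x^d := pow_pos hx0 d
        have hCk := Ck_pos k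
        have hak : (0:ℝ) < ((k:ℝ)+1/2)^k := pow_pos ha2 k
        have step1 : 2 * M ≤ 2 * (Ck k / ((k:ℝ)+1/2)^k / x^d *
            (Zf (n d) ((k:ℝ)+1/2) * Real.exp (((k:ℝ)+1/2)*(x-1)*(1 + β*d)))) := by
          have := hMle.trans (mul_le_mul_of_nonneg_left hZax (by positivity))
          linarith
        have hE2 : (0:ℝ) < Real.exp (((k:ℝ)+1/2)*(x-1)*(1 + β*d)) := Real.exp_pos _
        have step3 : 2 * (Ck k / ((k:ℝ)+1/2)^k / x^d *
            (Zf (n d) ((k:ℝ)+1/2) * Real.exp (((k:ℝ)+1/2)*(x-1)*(1 + β*d))))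
            ≤ (4 * Ck k * Real.exp (((k:ℝ)+1/2)*(x-1)*(1 + β*d)) / x^d)
              * lahNum (1/2) (n d) k := by
          have h1 : 2 * (Ck k / ((k:ℝ)+1/2)^k / x^d) * Real.exp (((k:ℝ)+1/2)*(x-1)*(1 + β*d))
              * Zf (n d) ((k:ℝ)+1/2)
              ≤ 2 * (Ck k / ((k:ℝ)+1/2)^k / x^d) * Real.exp (((k:ℝ)+1/2)*(x-1)*(1 + β*d))
              * (2*((k:ℝ)+1/2)^k * lahNum (1/2) (n d) k) :=
            mul_le_mul_of_nonneg_left hL (by positivity)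
          calc 2 * (Ck k / ((k:ℝ)+1/2)^k / x^d *
              (Zf (n d) ((k:ℝ)+1/2) * Real.exp (((k:ℝ)+1/2)*(x-1)*(1 + β*d))))
              = 2 * (Ck k / ((k:ℝ)+1/2)^k / x^d) * Real.exp (((k:ℝ)+1/2)*(x-1)*(1 + β*d))
                * Zf (n d) ((k:ℝ)+1/2) := by ring
            _ ≤ 2 * (Ck k / ((k:ℝ)+1/2)^k / x^d) * Real.exp (((k:ℝ)+1/2)*(x-1)*(1 + β*d))
                * (2*((k:ℝ)+1/2)^k * lahNum (1/2) (n d) k) := h1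
            _ = (4 * Ck k * Real.exp (((k:ℝ)+1/2)*(x-1)*(1 + β*d)) / x^d)
                * lahNum (1/2) (n d) k := by field_simp; ring
        have step4 : 4 * Ck k * Real.exp (((k:ℝ)+1/2)*(x-1)*(1 + β*d)) / x^d
            ≤ (4 * Ck k * Real.exp (((k:ℝ)+1/2)*(x-1)))
              * Real.exp (-((Real.log x - ((k:ℝ)+1/2)*β*(x-1)) * d)) := by
          have hxpow : x^d = Real.exp ((d:ℝ) * Real.log x) := by
            rw [← Real.exp_log hx0, ← Real.exp_nat_mul, Real.exp_log hx0]
          rw [hxpow, mul_div_assoc, ← Real.exp_sub, mul_assoc (4 * Ck k), ← Real.exp_add]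
          apply mul_le_mul_of_nonneg_left _ (by positivity)
          apply Real.exp_le_exp.mpr
          apply le_of_eq
          ring
        calc 2 * M ≤ 2 * (Ck k / ((k:ℝ)+1/2)^k / x^d *
            (Zf (n d) ((k:ℝ)+1/2) * Real.exp (((k:ℝ)+1/2)*(x-1)*(1 + β*d)))) := step1
          _ ≤ (4 * Ck k * Real.exp (((k:ℝ)+1/2)*(x-1)*(1 + β*d)) / x^d)
              * lahNum (1/2) (n d) k := step3
          _ ≤ ((4 * Ck k * Real.exp (((k:ℝ)+1/2)*(x-1)))
              * Real.exp (-((Real.log x - ((k:ℝ)+1/2)*β*(x-1)) * d)))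
              * lahNum (1/2) (n d) k :=
            mul_le_mul_of_nonneg_right step4 (le_of_lt hLpos)
      · rw [hR]
        positivity
    have hRtend : Tendsto (fun d => 1 - G d) atTop (nhds 0) := by
      apply squeeze_zero' (hRu.mono (fun d h => h.2)) (hRu.mono (fun d h => h.1))
      exact exp_decay_tendsto _ _ hε
    have := tendsto_const_nhds (x := (1:ℝ)) (f := atTop (α := ℕ)) |>.sub hRtend
    simp only [sub_zero] at this
    refine this.congr (fun d => by ring)
  · -- 1/a < γ : tendsto 0
    intro hlt
    obtain ⟨β, hβ1, hβ2⟩ := EReal.exists_between_coe_real hlt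
    have hβτ : 1/((k:ℝ)+1/2) < β := EReal.coe_lt_coe_iff.mp hβ1
    have hβ0 : 0 < β := lt_trans (by positivity) hβτ
    have hs1 : 1 < ((k:ℝ)+1/2) * β := by
      rw [div_lt_iff₀ ha2] at hβτ
      nlinarith
    obtain ⟨x, hx1, hx0, hε⟩ : ∃ x:ℝ, x < 1 ∧ 0 < x ∧
        0 < ((k:ℝ)+1/2)*β*(1-x) + Real.log x := by
      obtain ⟨t, htdef⟩ : ∃ t:ℝ, t = ((k:ℝ)+1/2)*β := ⟨_, rfl⟩
      rw [← htdef] at hs1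
      have ht0 : 0 < t := lt_trans one_pos hs1
      obtain ⟨x, hxdef⟩ : ∃ x:ℝ, x = 2/(1+t) := ⟨_, rfl⟩
      have hx0 : (0:ℝ) < x := by rw [hxdef]; positivity
      have hxe : x*(1+t) = 2 := by rw [hxdef]; field_simp
      have hx1 : x < 1 := by nlinarith
      refine ⟨x, hx1, hx0, ?_⟩
      rw [← htdef]
      have hlog := neg_log_le hx0
      have hxx : x * x⁻¹ = 1 := mul_inv_cancel₀ (ne_of_gt hx0)
      nlinarith [mul_le_mul_of_nonneg_left hlog (le_of_lt hx0), hxx, hx0,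
        sq_nonneg (1-x), mul_pos hx0 hx0]
    have hevβ : ∀ᶠ d : ℕ in atTop,
        (β : EReal) < ((Real.log (n d) / (d:ℝ) : ℝ) : EReal) :=
      hγ.eventually_const_lt hβ2
    have hGu : ∀ᶠ d : ℕ in atTop,
        G d ≤ (4 * Ck k * Real.exp (((k:ℝ)+1/2)*(1-x)*Real.log (((k:ℝ)+1/2)+1) + (-Real.log x)))
          * Real.exp (-((((k:ℝ)+1/2)*β*(1-x) + Real.log x) * d)) := by
      filter_upwards [hevβ, eventually_ge_atTop (max (k+2) (N₀+1))] with d hβd hd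
      have hdk : k + 2 ≤ d := le_trans (le_max_left _ _) hd
      have hd1 : 1 ≤ d := by omega
      have hdN : N₀ ≤ n d := by
        have h1 := hn d
        have h2 : N₀ + 1 ≤ d := le_trans (le_max_right _ _) hd
        omega
      have hkn : k ≤ n d := by have := hn d; omega
      have hL := hN₀ (n d) hdN hkn
      have hZpos : 0 < Zf (n d) ((k:ℝ)+1/2) := Zf_pos _ (le_of_lt ha2)
      have hLpos : 0 < lahNum (1/2) (n d) k := by
        nlinarith [pow_pos ha2 k]
      have hlogd : β * d < Real.log (n d) := by
        have h1 : β < Real.log (n d) / (d:ℝ) := EReal.coe_lt_coe_iff.mp hβd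
        have hd0 : (0:ℝ) < (d:ℝ) := by exact_mod_cast hd1
        rw [lt_div_iff₀ hd0] at h1
        linarith [h1]
      set num : ℕ → ℝ := fun j => stirFir (1/2) (n d) j * stirSec (1/2) j k with hnum
      -- S := filtered sum ≤ full sum over Icc k (d-1)
      have hsum : ∑ j ∈ (Finset.Icc k (d-1)).filter (fun j => j % 2 = (d-1) % 2), num j
          ≤ ∑ j ∈ Finset.Icc k (d-1), num j := by
        apply Finset.sum_le_sum_of_subset_of_nonneg (Finset.filter_subset _ _)
        intro j _ _
        exact mul_nonneg (sF_nonneg _ _) (sS_nonneg _ _)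
      have htail : ∑ j ∈ Finset.Icc k (d-1), num j
          ≤ Ck k / ((k:ℝ)+1/2)^k / x^(d-1) * Zf (n d) (((k:ℝ)+1/2)*x) := by
        apply tail_core k (n d) (d-1)
        · intro j hj
          rw [Finset.mem_range]
          have h1 := (Finset.mem_Icc.mp hj).2
          have h2 := hn d
          omega
        · intro j hj
          exact (Finset.mem_Icc.mp hj).1
        · exact hx0
        · intro j hj
          exact pow_le_pow_of_le_one (le_of_lt hx0) (le_of_lt hx1) (Finset.mem_Icc.mp hj).2
      have hP2 := P2 ha12 (le_of_lt hx0) (le_of_lt hx1) (n d)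
      have hlogN : β * d ≤ Real.log ((n d : ℝ) + (((k:ℝ)+1/2)+1)) := by
        have hN1 : (1:ℝ) ≤ (n d : ℝ) := by
          have := hn d
          exact_mod_cast le_trans hd1 this
        have h2 : Real.log (n d) ≤ Real.log ((n d : ℝ) + (((k:ℝ)+1/2)+1)) :=
          Real.log_le_log (by linarith) (by linarith)
        linarith
      have he2 : -(((k:ℝ)+1/2)*(1-x)) * (Real.log ((n d : ℝ) + (((k:ℝ)+1/2)+1))
            - Real.log (((k:ℝ)+1/2)+1))
          ≤ -(((k:ℝ)+1/2)*(1-x)) * (β*d - Real.log (((k:ℝ)+1/2)+1)) := by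
        have hc : 0 ≤ ((k:ℝ)+1/2)*(1-x) := by nlinarith
        nlinarith [mul_le_mul_of_nonneg_left hlogN hc]
      have hZax : Zf (n d) (((k:ℝ)+1/2)*x)
          ≤ Zf (n d) ((k:ℝ)+1/2)
            * Real.exp (-(((k:ℝ)+1/2)*(1-x)) * (β*d - Real.log (((k:ℝ)+1/2)+1))) := by
        refine hP2.trans ?_
        exact mul_le_mul_of_nonneg_left (Real.exp_le_exp.mpr he2) (le_of_lt hZpos)
      -- assemble
      rw [hG]
      simp only
      have hsum_div : ∑ j ∈ (Finset.Icc k (d-1)).filter (fun j => j % 2 = (d-1) % 2),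
          lahPMF (1/2) (n d) k j
          = (∑ j ∈ (Finset.Icc k (d-1)).filter (fun j => j % 2 = (d-1) % 2), num j)
            / lahNum (1/2) (n d) k := by
        rw [Finset.sum_div]
        exact Finset.sum_congr rfl (fun j _ => rfl)
      rw [hsum_div, mul_div_assoc' 2]
      rw [div_le_iff₀ hLpos]
      have hxd : (0:ℝ) < x^(d-1) := pow_pos hx0 (d-1)
      have hCk := Ck_pos k
      have hak : (0:ℝ) < ((k:ℝ)+1/2)^k := pow_pos ha2 k
      have step1 : 2 * ∑ j ∈ (Finset.Icc k (d-1)).filter (fun j => j % 2 = (d-1) % 2), num j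
          ≤ 2 * (Ck k / ((k:ℝ)+1/2)^k / x^(d-1) *
            (Zf (n d) ((k:ℝ)+1/2)
              * Real.exp (-(((k:ℝ)+1/2)*(1-x)) * (β*d - Real.log (((k:ℝ)+1/2)+1))))) := by
        have h1 := (hsum.trans htail).trans (mul_le_mul_of_nonneg_left hZax (by positivity))
        linarith
      have step3 : 2 * (Ck k / ((k:ℝ)+1/2)^k / x^(d-1) *
          (Zf (n d) ((k:ℝ)+1/2)
            * Real.exp (-(((k:ℝ)+1/2)*(1-x)) * (β*d - Real.log (((k:ℝ)+1/2)+1)))))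
          ≤ (4 * Ck k * Real.exp (-(((k:ℝ)+1/2)*(1-x)) * (β*d - Real.log (((k:ℝ)+1/2)+1)))
              / x^(d-1)) * lahNum (1/2) (n d) k := by
        have h1 : 2 * (Ck k / ((k:ℝ)+1/2)^k / x^(d-1))
            * Real.exp (-(((k:ℝ)+1/2)*(1-x)) * (β*d - Real.log (((k:ℝ)+1/2)+1)))
            * Zf (n d) ((k:ℝ)+1/2)
            ≤ 2 * (Ck k / ((k:ℝ)+1/2)^k / x^(d-1))
            * Real.exp (-(((k:ℝ)+1/2)*(1-x)) * (β*d - Real.log (((k:ℝ)+1/2)+1)))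
            * (2*((k:ℝ)+1/2)^k * lahNum (1/2) (n d) k) :=
          mul_le_mul_of_nonneg_left hL (by positivity)
        calc 2 * (Ck k / ((k:ℝ)+1/2)^k / x^(d-1) *
            (Zf (n d) ((k:ℝ)+1/2)
              * Real.exp (-(((k:ℝ)+1/2)*(1-x)) * (β*d - Real.log (((k:ℝ)+1/2)+1)))))
            = 2 * (Ck k / ((k:ℝ)+1/2)^k / x^(d-1))
              * Real.exp (-(((k:ℝ)+1/2)*(1-x)) * (β*d - Real.log (((k:ℝ)+1/2)+1)))
              * Zf (n d) ((k:ℝ)+1/2) := by ring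
          _ ≤ 2 * (Ck k / ((k:ℝ)+1/2)^k / x^(d-1))
              * Real.exp (-(((k:ℝ)+1/2)*(1-x)) * (β*d - Real.log (((k:ℝ)+1/2)+1)))
              * (2*((k:ℝ)+1/2)^k * lahNum (1/2) (n d) k) := h1
          _ = (4 * Ck k * Real.exp (-(((k:ℝ)+1/2)*(1-x)) * (β*d - Real.log (((k:ℝ)+1/2)+1)))
              / x^(d-1)) * lahNum (1/2) (n d) k := by field_simp; ring
      have step4 : 4 * Ck k * Real.exp (-(((k:ℝ)+1/2)*(1-x)) * (β*d - Real.log (((k:ℝ)+1/2)+1)))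
            / x^(d-1)
          ≤ (4 * Ck k * Real.exp (((k:ℝ)+1/2)*(1-x)*Real.log (((k:ℝ)+1/2)+1) + (-Real.log x)))
            * Real.exp (-((((k:ℝ)+1/2)*β*(1-x) + Real.log x) * d)) := by
        have hxpow : x^(d-1) = Real.exp (((d:ℝ)-1) * Real.log x) := by
          rw [← Real.exp_log hx0, ← Real.exp_nat_mul, Real.exp_log hx0]
          congr 1
          have : ((d-1 : ℕ):ℝ) = (d:ℝ) - 1 := by
            have : 1 ≤ d := hd1
            push_cast [Nat.cast_sub this]
            ring
          rw [this]
        rw [hxpow, mul_div_assoc, ← Real.exp_sub, mul_assoc (4 * Ck k), ← Real.exp_add]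
        apply mul_le_mul_of_nonneg_left _ (by positivity)
        apply Real.exp_le_exp.mpr
        have hlogxneg : Real.log x < 0 := Real.log_neg hx0 hx1
        nlinarith [hlogxneg]
      calc 2 * ∑ j ∈ (Finset.Icc k (d-1)).filter (fun j => j % 2 = (d-1) % 2), num j
          ≤ 2 * (Ck k / ((k:ℝ)+1/2)^k / x^(d-1) *
            (Zf (n d) ((k:ℝ)+1/2)
              * Real.exp (-(((k:ℝ)+1/2)*(1-x)) * (β*d - Real.log (((k:ℝ)+1/2)+1))))) := step1
        _ ≤ (4 * Ck k * Real.exp (-(((k:ℝ)+1/2)*(1-x)) * (β*d - Real.log (((k:ℝ)+1/2)+1)))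
            / x^(d-1)) * lahNum (1/2) (n d) k := step3
        _ ≤ ((4 * Ck k * Real.exp (((k:ℝ)+1/2)*(1-x)*Real.log (((k:ℝ)+1/2)+1) + (-Real.log x)))
            * Real.exp (-((((k:ℝ)+1/2)*β*(1-x) + Real.log x) * d)))
            * lahNum (1/2) (n d) k :=
          mul_le_mul_of_nonneg_right step4 (le_of_lt hLpos)
    exact squeeze_zero' (Eventually.of_forall hGnonneg) hGu (exp_decay_tendsto _ _ hε)
end
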